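/- arXiv:1910.10315 — 3 statements merged into one kernel-verified Lean document; each statement's English description precedes it below -/
import Mathlib

section
/- Let n ≥ 1, m ∈ ℕ ∪ {0}, 0 ≤ α < n, 0 < δ < 1 with mδ < n − α, α̃ = mδ + α, and let 1 ≤ r ≤ ∞ be such that δ < α̃ − n/r (with n/∞ = 0). Let θ satisfy α̃ − n/r − δ < θ < n/r' and set β = θ + δ + n/r − α̃, so that β > 0. Then the pair of weights (v,w) given by v(x) = |x|^(−θ) and w(x) = |x|^(−β) belongs to the class H(r, α̃, δ), i.e. to H(r, α̃, δ̃) with δ̃ = δ. -/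
open MeasureTheory Metric ENNReal NNReal

noncomputable section

/-- Euclidean space `ℝⁿ`. -/
abbrev E (n : ℕ) := EuclideanSpace ℝ (Fin n)

/-- `(∫ f^p dμ)^(1/p)` for finite `p`, and the essential supremum for `p = ∞`. -/
noncomputable def eN {n : ℕ} (p : ℝ≥0∞) (f : E n → ℝ≥0∞) (μ : Measure (E n)) : ℝ≥0∞ :=
  if p = ∞ then essSup f μ else (∫⁻ y, f y ^ p.toReal ∂μ) ^ (1 / p.toReal)

/-- The two-weight class `H(r, αt, δt)` with constant `C`, where `r'` denotes the
conjugate exponent of `r` (so the `r = 1`, `r' = ∞` case is the essential supremum,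
built into `eN`). -/
def Hclass (n : ℕ) (r' : ℝ≥0∞) (αt δ δt : ℝ) (v w : E n → ℝ≥0∞) (C : ℝ≥0∞) : Prop :=
  ∀ (c : E n) (R : ℝ), 0 < R →
    essSup (fun y => (w y)⁻¹) (volume.restrict (ball c R)) *
        volume (ball c R) ^ ((δ - δt) / (n : ℝ)) *
        eN r' (fun y =>
          v y * (volume (ball c R) ^ ((1 : ℝ) / (n : ℝ)) +
            ENNReal.ofReal (dist c y)) ^ (-((n : ℝ) - αt + δ))) volume ≤ C

/-- The local condition (L) with constant `C`. -/
def LocalCond (n : ℕ) (r r' : ℝ≥0∞) (αt δt : ℝ) (v w : E n → ℝ≥0∞) (C : ℝ≥0∞) : Prop :=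
  ∀ (c : E n) (R : ℝ), 0 < R →
    essSup (fun y => (w y)⁻¹) (volume.restrict (ball c R)) *
        volume (ball c R) ^ ((αt - δt) / (n : ℝ) - r⁻¹.toReal) *
        eN r' v ((volume (ball c R))⁻¹ • volume.restrict (ball c R)) ≤ C

/-- The global condition (G) with constant `C`. -/
def GlobalCond (n : ℕ) (r' : ℝ≥0∞) (αt δ δt : ℝ) (v w : E n → ℝ≥0∞) (C : ℝ≥0∞) : Prop :=
  ∀ (c : E n) (R : ℝ), 0 < R →
    essSup (fun y => (w y)⁻¹) (volume.restrict (ball c R)) *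
        volume (ball c R) ^ ((δ - δt) / (n : ℝ)) *
        eN r' (fun y => v y * (ENNReal.ofReal (dist c y)) ^ (-((n : ℝ) - αt + δ)))
          (volume.restrict ((ball c R)ᶜ)) ≤ C

/-- `b ∈ Λ(δ)` with Lipschitz-`δ` constant `Cb`. -/
def LipDelta {n : ℕ} (δ Cb : ℝ) (b : E n → ℝ) : Prop :=
  ∀ x y : E n, |b x - b y| ≤ Cb * dist x y ^ δ

/-- The size condition `S*_α` with constant `A`. -/
def SizeCond (n : ℕ) (α A : ℝ) (K : E n → ℝ) : Prop :=
  ∀ x : E n, x ≠ 0 → |K x| ≤ A * ‖x‖ ^ (α - (n : ℝ))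

/-- The smoothness condition `H*_{α,∞}` with exponent `γ` and constant `A`. -/
def SmoothCond (n : ℕ) (α γ A : ℝ) (K : E n → ℝ) : Prop :=
  ∀ x x' y : E n, 2 * dist x x' ≤ dist x y →
    |K (x - y) - K (x' - y)| + |K (y - x) - K (y - x')| ≤
      A * dist x x' ^ γ / dist x y ^ ((n : ℝ) - α + γ)


lemma frk (n : ℕ) : Module.finrank ℝ (E n) = n := finrank_euclideanSpace_fin

lemma vol_ball {n : ℕ} (hn : 1 ≤ n) (c : E n) {t : ℝ} (ht : 0 ≤ t) :
    volume (ball c t) = ENNReal.ofReal (t ^ n) * volume (ball (0 : E n) 1) := by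
  haveI : Nontrivial (E n) := Module.nontrivial_of_finrank_pos (by rw [frk]; omega)
  rw [Measure.addHaar_ball _ _ ht, frk]

lemma rpow_anti {x y : ℝ≥0∞} {a : ℝ} (hxy : x ≤ y) (ha : 0 ≤ a) : y ^ (-a) ≤ x ^ (-a) := by
  rw [ENNReal.rpow_neg, ENNReal.rpow_neg]
  exact ENNReal.inv_le_inv.mpr (ENNReal.rpow_le_rpow hxy ha)

/-- Dyadic bound for ∫ ‖y‖^(-a) over a ball, 0 < a < n. -/
lemma lintA {n : ℕ} (hn : 1 ≤ n) {a : ℝ} (ha : 0 < a) (han : a < n) :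
    ∃ K : ℝ≥0∞, K ≠ ⊤ ∧ ∀ s : ℝ, 0 < s →
      (∫⁻ y in ball (0 : E n) s, (ENNReal.ofReal ‖y‖) ^ (-a)) ≤
        K * ENNReal.ofReal (s ^ ((n : ℝ) - a)) := by
  haveI : Nontrivial (E n) := Module.nontrivial_of_finrank_pos (by rw [frk]; omega)
  set ν : ℝ≥0∞ := volume (ball (0 : E n) 1) with hν
  have hνfin : ν ≠ ⊤ := measure_ball_lt_top.ne
  set q : ℝ := 2⁻¹ with hqdef
  have hq0 : (0:ℝ) < q := by norm_num
  have hq1 : q < 1 := by norm_num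
  have hena : (0:ℝ) < (n:ℝ) - a := by linarith
  set r : ℝ≥0∞ := ENNReal.ofReal (q ^ ((n:ℝ) - a)) with hr
  have hr1 : r < 1 := by
    rw [hr, ← ENNReal.ofReal_one]
    exact ENNReal.ofReal_lt_ofReal_iff_of_nonneg (Real.rpow_nonneg hq0.le _) |>.mpr
      (Real.rpow_lt_one hq0.le hq1 hena)
  have hsum : (∑' k : ℕ, r ^ k) = (1 - r)⁻¹ := ENNReal.tsum_geometric r
  have hsumfin : (∑' k : ℕ, r ^ k) ≠ ⊤ := by
    rw [hsum]
    simp [ENNReal.inv_ne_top, tsub_eq_zero_iff_le, hr1.not_ge]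
  refine ⟨ENNReal.ofReal (2 ^ n) * ν * (∑' k : ℕ, r ^ k), by
      exact ENNReal.mul_ne_top (ENNReal.mul_ne_top ENNReal.ofReal_ne_top hνfin) hsumfin,
    fun s hs => ?_⟩
  set A : ℕ → Set (E n) := fun k => ball (0 : E n) (s * q ^ k) \ ball (0 : E n) (s * q ^ (k+1))
    with hA
  have hcover : ball (0 : E n) s ⊆ {(0 : E n)} ∪ ⋃ k, A k := by
    intro y hy
    rcases eq_or_ne y 0 with rfl | hy0
    · exact Set.mem_union_left _ rfl
    refine Set.mem_union_right _ ?_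
    have hny : 0 < ‖y‖ := norm_pos_iff.mpr hy0
    have hex : ∃ k : ℕ, s * q ^ (k+1) ≤ ‖y‖ := by
      obtain ⟨m, hm⟩ := exists_pow_lt_of_lt_one (div_pos hny hs) hq1
      refine ⟨m, ?_⟩
      have : q ^ (m+1) ≤ q ^ m := pow_le_pow_of_le_one hq0.le hq1.le (by omega)
      have h2 : q ^ (m+1) < ‖y‖ / s := lt_of_le_of_lt this hm
      calc s * q ^ (m+1) ≤ s * (‖y‖ / s) := by nlinarith
        _ = ‖y‖ := by field_simp
    classical
    set k0 := Nat.find hex with hk0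
    refine Set.mem_iUnion.mpr ⟨k0, ?_, ?_⟩
    · simp only [mem_ball, dist_zero_right]
      rcases Nat.eq_zero_or_pos k0 with h0 | hpos
      · rw [h0]
        simpa using (mem_ball_zero_iff.mp hy)
      · obtain ⟨j, hj⟩ := Nat.exists_eq_succ_of_ne_zero hpos.ne'
        have := Nat.find_min hex (by omega : j < k0)
        rw [hj]
        push_neg at this
        simpa using this
    · simp only [mem_ball, dist_zero_right, not_lt]
      exact Nat.find_spec hex
  calc (∫⁻ y in ball (0 : E n) s, (ENNReal.ofReal ‖y‖) ^ (-a))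
      ≤ ∫⁻ y in {(0 : E n)} ∪ ⋃ k, A k, (ENNReal.ofReal ‖y‖) ^ (-a) :=
        lintegral_mono_set hcover
    _ ≤ (∫⁻ y in {(0 : E n)}, (ENNReal.ofReal ‖y‖) ^ (-a)) +
        ∫⁻ y in ⋃ k, A k, (ENNReal.ofReal ‖y‖) ^ (-a) := lintegral_union_le _ _ _
    _ ≤ 0 + ∑' k, ∫⁻ y in A k, (ENNReal.ofReal ‖y‖) ^ (-a) := by
        gcongr
        · exact le_of_eq (setLIntegral_measure_zero _ _ (measure_singleton _))
        · exact lintegral_iUnion_le _ _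
    _ = ∑' k, ∫⁻ y in A k, (ENNReal.ofReal ‖y‖) ^ (-a) := by rw [zero_add]
    _ ≤ ∑' k, (ENNReal.ofReal (2 ^ n) * ν * ENNReal.ofReal (s ^ ((n:ℝ) - a))) * r ^ k := by
        gcongr with k
        have hlow : ∀ y ∈ A k, (ENNReal.ofReal ‖y‖) ^ (-a) ≤
            ENNReal.ofReal ((s * q ^ (k+1)) ^ (-a)) := by
          intro y hy
          have h1 : s * q ^ (k+1) ≤ ‖y‖ := by
            have := hy.2
            simpa [mem_ball, dist_zero_right, not_lt] using this
          rw [← ENNReal.ofReal_rpow_of_pos (by positivity)]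
          exact rpow_anti (ENNReal.ofReal_le_ofReal h1) ha.le
        have hmeas : volume (A k) ≤ ENNReal.ofReal ((s * q ^ k) ^ n) * ν :=
          le_trans (measure_mono Set.diff_subset)
            (le_of_eq (vol_ball hn _ (by positivity)))
        calc (∫⁻ y in A k, (ENNReal.ofReal ‖y‖) ^ (-a))
            ≤ ∫⁻ _ in A k, ENNReal.ofReal ((s * q ^ (k+1)) ^ (-a)) :=
              setLIntegral_mono' (measurableSet_ball.diff measurableSet_ball) hlow
          _ = ENNReal.ofReal ((s * q ^ (k+1)) ^ (-a)) * volume (A k) := by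
              rw [setLIntegral_const]
          _ ≤ ENNReal.ofReal ((s * q ^ (k+1)) ^ (-a)) *
              (ENNReal.ofReal ((s * q ^ k) ^ n) * ν) := by gcongr
          _ ≤ (ENNReal.ofReal (2 ^ n) * ν * ENNReal.ofReal (s ^ ((n:ℝ) - a))) * r ^ k := by
              have ht : (0:ℝ) < s * q ^ (k+1) := by positivity
              set t := s * q ^ (k+1) with htdef
              have h2t : s * q ^ k = 2 * t := by
                rw [htdef, hqdef]; rw [pow_succ]; ring
              have hqe1 : q ^ ((n:ℝ) - a) ≤ 1 := Real.rpow_le_one hq0.le hq1.le hena.le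
              have key : t ^ (-a) * (2*t) ^ n ≤
                  2 ^ n * s ^ ((n:ℝ)-a) * ((q ^ ((n:ℝ)-a)) ^ k) := by
                have h1 : (2*t : ℝ) ^ n = 2 ^ n * t ^ n := by rw [mul_pow]
                have h2 : t ^ (-a) * t ^ (n:ℕ) = t ^ ((n:ℝ) - a) := by
                  rw [← Real.rpow_natCast t n, ← Real.rpow_add ht]; ring_nf
                have h3 : t ^ ((n:ℝ)-a) = s ^ ((n:ℝ)-a) * (q ^ ((n:ℝ)-a)) ^ (k+1) := by
                  rw [htdef, Real.mul_rpow hs.le (by positivity),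
                      ← Real.rpow_natCast q (k+1), ← Real.rpow_mul hq0.le,
                      mul_comm ((k+1 : ℕ):ℝ) ((n:ℝ)-a), Real.rpow_mul hq0.le,
                      Real.rpow_natCast]
                have h4 : (q ^ ((n:ℝ)-a)) ^ (k+1) ≤ (q ^ ((n:ℝ)-a)) ^ k :=
                  pow_le_pow_of_le_one (Real.rpow_nonneg hq0.le _) hqe1 (by omega)
                calc t ^ (-a) * (2*t) ^ n = 2 ^ n * (t ^ (-a) * t ^ n) := by rw [h1]; ring
                  _ = 2 ^ n * (s ^ ((n:ℝ)-a) * (q ^ ((n:ℝ)-a)) ^ (k+1)) := by rw [h2, h3]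
                  _ ≤ 2 ^ n * (s ^ ((n:ℝ)-a) * (q ^ ((n:ℝ)-a)) ^ k) := by
                      have hsn : (0:ℝ) ≤ s ^ ((n:ℝ)-a) := Real.rpow_nonneg hs.le _
                      have h5 := mul_le_mul_of_nonneg_left h4 hsn
                      nlinarith [pow_pos (by norm_num : (0:ℝ) < 2) n, h5]
                  _ = 2 ^ n * s ^ ((n:ℝ)-a) * ((q ^ ((n:ℝ)-a)) ^ k) := by ring
              rw [h2t]
              calc ENNReal.ofReal (t ^ (-a)) * (ENNReal.ofReal ((2*t) ^ n) * ν)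
                  = ENNReal.ofReal (t ^ (-a) * (2*t) ^ n) * ν := by
                    rw [ENNReal.ofReal_mul (Real.rpow_nonneg ht.le _), mul_assoc]
                _ ≤ ENNReal.ofReal (2 ^ n * s ^ ((n:ℝ)-a) * ((q ^ ((n:ℝ)-a)) ^ k)) * ν := by
                    exact mul_le_mul_left (ENNReal.ofReal_le_ofReal key) ν
                _ = (ENNReal.ofReal (2 ^ n) * ν * ENNReal.ofReal (s ^ ((n:ℝ) - a))) * r ^ k := by
                    rw [ENNReal.ofReal_mul (by positivity), ENNReal.ofReal_mul (by positivity),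
                      ENNReal.ofReal_pow (Real.rpow_nonneg hq0.le _), hr]
                    ring
    _ = (ENNReal.ofReal (2 ^ n) * ν * ENNReal.ofReal (s ^ ((n:ℝ) - a))) * (∑' k, r ^ k) :=
          ENNReal.tsum_mul_left
    _ = (ENNReal.ofReal (2 ^ n) * ν * (∑' k, r ^ k)) * ENNReal.ofReal (s ^ ((n:ℝ) - a)) := by
          ring

/-- Dyadic bound for ∫ ‖y‖^(-p) over complement of a ball, p > n. -/
lemma lintB {n : ℕ} (hn : 1 ≤ n) {p : ℝ} (hp : (n:ℝ) < p) :
    ∃ K : ℝ≥0∞, K ≠ ⊤ ∧ ∀ s : ℝ, 0 < s →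
      (∫⁻ y in (ball (0 : E n) s)ᶜ, (ENNReal.ofReal ‖y‖) ^ (-p)) ≤
        K * ENNReal.ofReal (s ^ ((n : ℝ) - p)) := by
  haveI : Nontrivial (E n) := Module.nontrivial_of_finrank_pos (by rw [frk]; omega)
  set ν : ℝ≥0∞ := volume (ball (0 : E n) 1) with hν
  have hνfin : ν ≠ ⊤ := measure_ball_lt_top.ne
  have hnp : ((n:ℝ) - p) < 0 := by linarith
  set r : ℝ≥0∞ := ENNReal.ofReal ((2:ℝ) ^ ((n:ℝ) - p)) with hr
  have hr1 : r < 1 := by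
    rw [hr, ← ENNReal.ofReal_one]
    exact ENNReal.ofReal_lt_ofReal_iff_of_nonneg (Real.rpow_nonneg (by norm_num) _) |>.mpr
      (Real.rpow_lt_one_of_one_lt_of_neg one_lt_two hnp)
  have hsumfin : (∑' k : ℕ, r ^ k) ≠ ⊤ := by
    rw [ENNReal.tsum_geometric r]
    simp [ENNReal.inv_ne_top, tsub_eq_zero_iff_le, hr1.not_ge]
  refine ⟨ENNReal.ofReal (2 ^ n) * ν * (∑' k : ℕ, r ^ k), by
      exact ENNReal.mul_ne_top (ENNReal.mul_ne_top ENNReal.ofReal_ne_top hνfin) hsumfin,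
    fun s hs => ?_⟩
  set B : ℕ → Set (E n) := fun k =>
    ball (0 : E n) (s * 2 ^ (k+1)) \ ball (0 : E n) (s * 2 ^ k) with hB
  have hcover : (ball (0 : E n) s)ᶜ ⊆ ⋃ k, B k := by
    intro y hy
    have hy1 : s ≤ ‖y‖ := by
      have := hy
      simp only [Set.mem_compl_iff, mem_ball, dist_zero_right, not_lt] at this
      exact this
    have hex : ∃ k : ℕ, ‖y‖ < s * 2 ^ (k+1) := by
      obtain ⟨m, hm⟩ := pow_unbounded_of_one_lt (‖y‖ / s) (one_lt_two (α := ℝ))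
      refine ⟨m, ?_⟩
      have h2 : ‖y‖ / s < 2 ^ (m+1) :=
        lt_of_lt_of_le hm (pow_le_pow_right₀ one_le_two (by omega))
      calc ‖y‖ = s * (‖y‖ / s) := by field_simp
        _ < s * 2 ^ (m+1) := by
          exact mul_lt_mul_of_pos_left h2 hs
    classical
    set k0 := Nat.find hex with hk0
    refine Set.mem_iUnion.mpr ⟨k0, ?_, ?_⟩
    · simpa [mem_ball, dist_zero_right] using Nat.find_spec hex
    · simp only [mem_ball, dist_zero_right, not_lt]
      rcases Nat.eq_zero_or_pos k0 with h0 | hpos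
      · rw [h0]; simpa using hy1
      · obtain ⟨j, hj⟩ := Nat.exists_eq_succ_of_ne_zero hpos.ne'
        have := Nat.find_min hex (by omega : j < k0)
        rw [hj]
        push_neg at this
        simpa using this
  calc (∫⁻ y in (ball (0 : E n) s)ᶜ, (ENNReal.ofReal ‖y‖) ^ (-p))
      ≤ ∫⁻ y in ⋃ k, B k, (ENNReal.ofReal ‖y‖) ^ (-p) := lintegral_mono_set hcover
    _ ≤ ∑' k, ∫⁻ y in B k, (ENNReal.ofReal ‖y‖) ^ (-p) := lintegral_iUnion_le _ _
    _ ≤ ∑' k, (ENNReal.ofReal (2 ^ n) * ν * ENNReal.ofReal (s ^ ((n:ℝ) - p))) * r ^ k := by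
        gcongr with k
        have hlow : ∀ y ∈ B k, (ENNReal.ofReal ‖y‖) ^ (-p) ≤
            ENNReal.ofReal ((s * 2 ^ k) ^ (-p)) := by
          intro y hy
          have h1 : s * 2 ^ k ≤ ‖y‖ := by
            have := hy.2
            simpa [mem_ball, dist_zero_right, not_lt] using this
          rw [← ENNReal.ofReal_rpow_of_pos (by positivity)]
          exact rpow_anti (ENNReal.ofReal_le_ofReal h1) (by linarith : (0:ℝ) ≤ p)
        have hmeas : volume (B k) ≤ ENNReal.ofReal ((s * 2 ^ (k+1)) ^ n) * ν :=
          le_trans (measure_mono Set.diff_subset)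
            (le_of_eq (vol_ball hn _ (by positivity)))
        set t : ℝ := s * 2 ^ k with htdef
        have ht : (0:ℝ) < t := by positivity
        have h2t : s * 2 ^ (k+1) = 2 * t := by rw [htdef, pow_succ]; ring
        have key : t ^ (-p) * (2*t) ^ n =
            2 ^ n * s ^ ((n:ℝ)-p) * (((2:ℝ) ^ ((n:ℝ)-p)) ^ k) := by
          have h1 : (2*t : ℝ) ^ n = 2 ^ n * t ^ n := by rw [mul_pow]
          have h2 : t ^ (-p) * t ^ (n:ℕ) = t ^ ((n:ℝ) - p) := by
            rw [← Real.rpow_natCast t n, ← Real.rpow_add ht]; ring_nf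
          have h3 : t ^ ((n:ℝ)-p) = s ^ ((n:ℝ)-p) * ((2:ℝ) ^ ((n:ℝ)-p)) ^ k := by
            rw [htdef, Real.mul_rpow hs.le (by positivity),
                ← Real.rpow_natCast (2:ℝ) k, ← Real.rpow_mul (by norm_num),
                mul_comm ((k : ℕ):ℝ) ((n:ℝ)-p), Real.rpow_mul (by norm_num),
                Real.rpow_natCast]
          calc t ^ (-p) * (2*t) ^ n = 2 ^ n * (t ^ (-p) * t ^ n) := by rw [h1]; ring
            _ = 2 ^ n * (s ^ ((n:ℝ)-p) * ((2:ℝ) ^ ((n:ℝ)-p)) ^ k) := by rw [h2, h3]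
            _ = 2 ^ n * s ^ ((n:ℝ)-p) * (((2:ℝ) ^ ((n:ℝ)-p)) ^ k) := by ring
        calc (∫⁻ y in B k, (ENNReal.ofReal ‖y‖) ^ (-p))
            ≤ ∫⁻ _ in B k, ENNReal.ofReal (t ^ (-p)) :=
              setLIntegral_mono' (measurableSet_ball.diff measurableSet_ball) hlow
          _ = ENNReal.ofReal (t ^ (-p)) * volume (B k) := by rw [setLIntegral_const]
          _ ≤ ENNReal.ofReal (t ^ (-p)) * (ENNReal.ofReal ((s * 2 ^ (k+1)) ^ n) * ν) := by
              gcongr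
          _ = ENNReal.ofReal (t ^ (-p) * (2*t) ^ n) * ν := by
              rw [h2t, ENNReal.ofReal_mul (Real.rpow_nonneg ht.le _), mul_assoc]
          _ = ENNReal.ofReal (2 ^ n * s ^ ((n:ℝ)-p) * (((2:ℝ) ^ ((n:ℝ)-p)) ^ k)) * ν := by
              rw [key]
          _ = (ENNReal.ofReal (2 ^ n) * ν * ENNReal.ofReal (s ^ ((n:ℝ) - p))) * r ^ k := by
              rw [ENNReal.ofReal_mul (by positivity), ENNReal.ofReal_mul (by positivity),
                ENNReal.ofReal_pow (Real.rpow_nonneg (by norm_num) _), hr]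
              ring
    _ = (ENNReal.ofReal (2 ^ n) * ν * ENNReal.ofReal (s ^ ((n:ℝ) - p))) * (∑' k, r ^ k) :=
          ENNReal.tsum_mul_left
    _ = (ENNReal.ofReal (2 ^ n) * ν * (∑' k, r ^ k)) * ENNReal.ofReal (s ^ ((n:ℝ) - p)) := by
          ring

lemma lint_translate {n : ℕ} (c : E n) (g : E n → ℝ≥0∞) (S : Set (E n)) :
    ∫⁻ y in S, g (y - c) = ∫⁻ z in (fun z : E n => z + c) ⁻¹' S, g z := by
  have h := (measurePreserving_add_right (volume : Measure (E n)) c).setLIntegral_comp_preimage_emb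
    (MeasurableEquiv.addRight c).measurableEmbedding (fun y => g (y - c)) S
  simpa using h.symm

lemma preim_ball {n : ℕ} (c : E n) (t : ℝ) :
    (fun z : E n => z + c) ⁻¹' ball c t = ball (0 : E n) t := by
  ext z
  simp [mem_ball, dist_eq_norm]

/-- Main integral bound. -/
lemma lintC {n : ℕ} (hn : 1 ≤ n) {a b : ℝ} (ha : 0 < a) (han : a < n)
    (hb : 0 < b) (hbn : b < n) (hab : (n:ℝ) < a + b) :
    ∃ K : ℝ≥0∞, K ≠ ⊤ ∧ ∀ (c : E n) (e : ℝ), 0 < e →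
      (∫⁻ y, (ENNReal.ofReal ‖y‖) ^ (-a) *
          (ENNReal.ofReal (e + dist c y)) ^ (-b)) ≤
        K * ENNReal.ofReal ((e + ‖c‖) ^ ((n:ℝ) - a - b)) := by
  obtain ⟨K1, hK1, HA⟩ := lintA hn ha han
  obtain ⟨K2, hK2, HA2⟩ := lintA hn hb hbn
  obtain ⟨K3, hK3, HB⟩ := lintB hn hab
  -- constants
  set Q : ℝ≥0∞ := ENNReal.ofReal ((2:ℝ) ^ (2*(n:ℝ))) with hQ
  set c1 : ℝ≥0∞ := ENNReal.ofReal ((2:ℝ) ^ (a + b - (n:ℝ))) * (K1 + K2 * Q + K3 * Q) with hc1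
  refine ⟨c1, by
      rw [hc1]
      exact ENNReal.mul_ne_top ENNReal.ofReal_ne_top (by
        exact ENNReal.add_ne_top.mpr ⟨ENNReal.add_ne_top.mpr ⟨hK1,
          ENNReal.mul_ne_top hK2 ENNReal.ofReal_ne_top⟩,
          ENNReal.mul_ne_top hK3 ENNReal.ofReal_ne_top⟩)
      ,
    fun c e he => ?_⟩
  set d : ℝ := e + ‖c‖ with hd
  have hd0 : 0 < d := by positivity
  set E0 : ℝ := (n:ℝ) - a - b with hE0
  have hE0neg : E0 < 0 := by rw [hE0]; linarith
  set f : E n → ℝ≥0∞ := fun y =>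
    (ENNReal.ofReal ‖y‖) ^ (-a) * (ENNReal.ofReal (e + dist c y)) ^ (-b) with hf
  set S1 : Set (E n) := ball (0 : E n) (d/2) with hS1
  set S2 : Set (E n) := ball c (2*d) \ S1 with hS2
  set S3 : Set (E n) := (ball c (2*d))ᶜ with hS3
  have hcover : (Set.univ : Set (E n)) ⊆ S1 ∪ (S2 ∪ S3) := by
    intro y _
    by_cases h1 : y ∈ S1
    · exact Set.mem_union_left _ h1
    by_cases h2 : y ∈ ball c (2*d)
    · exact Set.mem_union_right _ (Set.mem_union_left _ ⟨h2, h1⟩)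
    · exact Set.mem_union_right _ (Set.mem_union_right _ h2)
  -- three bounds
  have bound1 : (∫⁻ y in S1, f y) ≤
      ENNReal.ofReal ((d/2) ^ (-b)) * (K1 * ENNReal.ofReal ((d/2) ^ ((n:ℝ) - a))) := by
    have hpt : ∀ y ∈ S1, f y ≤
        ENNReal.ofReal ((d/2) ^ (-b)) * (ENNReal.ofReal ‖y‖) ^ (-a) := by
      intro y hy
      have h1 : ‖y‖ < d/2 := by simpa [hS1, mem_ball, dist_zero_right] using hy
      have h2 : d/2 ≤ e + dist c y := by
        have h3 : ‖c‖ - ‖y‖ ≤ ‖c - y‖ := norm_sub_norm_le c y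
        have h4 : dist c y = ‖c - y‖ := dist_eq_norm c y
        linarith
      have hBB : (ENNReal.ofReal (e + dist c y)) ^ (-b) ≤ ENNReal.ofReal ((d/2) ^ (-b)) := by
        rw [← ENNReal.ofReal_rpow_of_pos (by positivity)]
        exact rpow_anti (ENNReal.ofReal_le_ofReal h2) hb.le
      show (ENNReal.ofReal ‖y‖) ^ (-a) * (ENNReal.ofReal (e + dist c y)) ^ (-b) ≤ _
      rw [mul_comm]
      exact mul_le_mul' hBB le_rfl
    calc (∫⁻ y in S1, f y)
        ≤ ∫⁻ y in S1, ENNReal.ofReal ((d/2) ^ (-b)) * (ENNReal.ofReal ‖y‖) ^ (-a) :=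
          setLIntegral_mono' measurableSet_ball hpt
      _ = ENNReal.ofReal ((d/2) ^ (-b)) * ∫⁻ y in S1, (ENNReal.ofReal ‖y‖) ^ (-a) :=
          lintegral_const_mul' _ _ ENNReal.ofReal_ne_top
      _ ≤ ENNReal.ofReal ((d/2) ^ (-b)) * (K1 * ENNReal.ofReal ((d/2) ^ ((n:ℝ) - a))) := by
          gcongr
          exact HA (d/2) (by positivity)
  have bound2 : (∫⁻ y in S2, f y) ≤
      ENNReal.ofReal ((d/2) ^ (-a)) * (K2 * ENNReal.ofReal ((2*d) ^ ((n:ℝ) - b))) := by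
    have hpt : ∀ y ∈ S2, f y ≤
        ENNReal.ofReal ((d/2) ^ (-a)) * (ENNReal.ofReal (e + dist c y)) ^ (-b) := by
      intro y hy
      have h1 : d/2 ≤ ‖y‖ := by
        have := hy.2
        simpa [hS1, mem_ball, dist_zero_right, not_lt] using this
      have hAA : (ENNReal.ofReal ‖y‖) ^ (-a) ≤ ENNReal.ofReal ((d/2) ^ (-a)) := by
        rw [← ENNReal.ofReal_rpow_of_pos (by positivity)]
        exact rpow_anti (ENNReal.ofReal_le_ofReal h1) ha.le
      show (ENNReal.ofReal ‖y‖) ^ (-a) * (ENNReal.ofReal (e + dist c y)) ^ (-b) ≤ _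
      exact mul_le_mul' hAA le_rfl
    calc (∫⁻ y in S2, f y)
        ≤ ∫⁻ y in S2, ENNReal.ofReal ((d/2) ^ (-a)) * (ENNReal.ofReal (e + dist c y)) ^ (-b) :=
          setLIntegral_mono' (measurableSet_ball.diff measurableSet_ball) hpt
      _ = ENNReal.ofReal ((d/2) ^ (-a)) * ∫⁻ y in S2, (ENNReal.ofReal (e + dist c y)) ^ (-b) :=
          lintegral_const_mul' _ _ ENNReal.ofReal_ne_top
      _ ≤ ENNReal.ofReal ((d/2) ^ (-a)) *
          ∫⁻ y in ball c (2*d), (ENNReal.ofReal (e + dist c y)) ^ (-b) := by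
          gcongr
          exact Set.diff_subset
      _ ≤ ENNReal.ofReal ((d/2) ^ (-a)) * (K2 * ENNReal.ofReal ((2*d) ^ ((n:ℝ) - b))) := by
          gcongr
          have htr : (∫⁻ y in ball c (2*d), (ENNReal.ofReal (e + dist c y)) ^ (-b)) =
              ∫⁻ z in ball (0 : E n) (2*d), (ENNReal.ofReal (e + ‖z‖)) ^ (-b) := by
            have h0 : ∀ y : E n, (ENNReal.ofReal (e + dist c y)) ^ (-b) =
                (fun z : E n => (ENNReal.ofReal (e + ‖z‖)) ^ (-b)) (y - c) := by
              intro y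
              simp only []
              rw [dist_comm, dist_eq_norm]
            calc (∫⁻ y in ball c (2*d), (ENNReal.ofReal (e + dist c y)) ^ (-b))
                = ∫⁻ y in ball c (2*d),
                    (fun z : E n => (ENNReal.ofReal (e + ‖z‖)) ^ (-b)) (y - c) := by
                  exact lintegral_congr fun y => h0 y
              _ = ∫⁻ z in (fun z : E n => z + c) ⁻¹' ball c (2*d),
                    (ENNReal.ofReal (e + ‖z‖)) ^ (-b) :=
                  lint_translate c (fun z : E n => (ENNReal.ofReal (e + ‖z‖)) ^ (-b)) (ball c (2*d))
              _ = ∫⁻ z in ball (0 : E n) (2*d), (ENNReal.ofReal (e + ‖z‖)) ^ (-b) := by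
                  rw [preim_ball]
          rw [htr]
          refine le_trans ?_ (HA2 (2*d) (by positivity))
          refine setLIntegral_mono' measurableSet_ball fun z _ => ?_
          exact rpow_anti (ENNReal.ofReal_le_ofReal (by linarith [norm_nonneg z])) hb.le
  have bound3 : (∫⁻ y in S3, f y) ≤
      ENNReal.ofReal ((2:ℝ) ^ a) * (K3 * ENNReal.ofReal ((2*d) ^ ((n:ℝ) - (a+b)))) := by
    have hpt : ∀ y ∈ S3, f y ≤
        ENNReal.ofReal ((2:ℝ) ^ a) * (ENNReal.ofReal (dist c y)) ^ (-(a+b)) := by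
      intro y hy
      have h1 : 2*d ≤ dist c y := by
        have := hy
        simp only [hS3, Set.mem_compl_iff, mem_ball, not_lt, dist_comm] at this
        linarith [dist_comm c y ▸ this]
      have hdy : 0 < dist c y := by linarith
      have h2 : dist c y / 2 ≤ ‖y‖ := by
        have h3 : dist c y - ‖c‖ ≤ ‖y‖ := by
          have := norm_sub_norm_le (c - y) c
          have h4 : dist c y = ‖c - y‖ := dist_eq_norm c y
          have h5 : ‖c - y - c‖ = ‖y‖ := by
            rw [sub_sub_cancel_left, norm_neg]
          linarith
        have h6 : ‖c‖ ≤ d := by rw [hd]; linarith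
        linarith
      have hA' : (ENNReal.ofReal ‖y‖) ^ (-a) ≤ ENNReal.ofReal ((dist c y / 2) ^ (-a)) := by
        rw [← ENNReal.ofReal_rpow_of_pos (by positivity)]
        exact rpow_anti (ENNReal.ofReal_le_ofReal h2) ha.le
      have hB' : (ENNReal.ofReal (e + dist c y)) ^ (-b) ≤
          ENNReal.ofReal ((dist c y) ^ (-b)) := by
        rw [← ENNReal.ofReal_rpow_of_pos hdy]
        exact rpow_anti (ENNReal.ofReal_le_ofReal (by linarith)) hb.le
      calc f y ≤ ENNReal.ofReal ((dist c y / 2) ^ (-a)) * ENNReal.ofReal ((dist c y) ^ (-b)) :=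
            mul_le_mul' hA' hB'
        _ = ENNReal.ofReal ((dist c y / 2) ^ (-a) * (dist c y) ^ (-b)) :=
            (ENNReal.ofReal_mul (Real.rpow_nonneg (by positivity) _)).symm
        _ = ENNReal.ofReal ((2:ℝ) ^ a * (dist c y) ^ (-(a+b))) := by
            congr 1
            rw [Real.div_rpow hdy.le (by norm_num : (0:ℝ) ≤ 2)]
            rw [div_mul_eq_mul_div, ← Real.rpow_add hdy, Real.rpow_neg (by norm_num : (0:ℝ) ≤ 2)]
            rw [neg_add]
            field_simp
        _ = ENNReal.ofReal ((2:ℝ) ^ a) * ENNReal.ofReal ((dist c y) ^ (-(a+b))) :=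
            ENNReal.ofReal_mul (Real.rpow_nonneg (by norm_num) _)
        _ = ENNReal.ofReal ((2:ℝ) ^ a) * (ENNReal.ofReal (dist c y)) ^ (-(a+b)) := by
            rw [ENNReal.ofReal_rpow_of_pos hdy]
    calc (∫⁻ y in S3, f y)
        ≤ ∫⁻ y in S3, ENNReal.ofReal ((2:ℝ) ^ a) * (ENNReal.ofReal (dist c y)) ^ (-(a+b)) :=
          setLIntegral_mono' measurableSet_ball.compl hpt
      _ = ENNReal.ofReal ((2:ℝ) ^ a) * ∫⁻ y in S3, (ENNReal.ofReal (dist c y)) ^ (-(a+b)) :=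
          lintegral_const_mul' _ _ ENNReal.ofReal_ne_top
      _ ≤ ENNReal.ofReal ((2:ℝ) ^ a) * (K3 * ENNReal.ofReal ((2*d) ^ ((n:ℝ) - (a+b)))) := by
          gcongr
          have htr : (∫⁻ y in S3, (ENNReal.ofReal (dist c y)) ^ (-(a+b))) =
              ∫⁻ z in (ball (0 : E n) (2*d))ᶜ, (ENNReal.ofReal ‖z‖) ^ (-(a+b)) := by
            have h0 : ∀ y : E n, (ENNReal.ofReal (dist c y)) ^ (-(a+b)) =
                (fun z : E n => (ENNReal.ofReal ‖z‖) ^ (-(a+b))) (y - c) := by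
              intro y
              simp only []
              rw [dist_comm, dist_eq_norm]
            calc (∫⁻ y in S3, (ENNReal.ofReal (dist c y)) ^ (-(a+b)))
                = ∫⁻ y in S3, (fun z : E n => (ENNReal.ofReal ‖z‖) ^ (-(a+b))) (y - c) :=
                  lintegral_congr fun y => h0 y
              _ = ∫⁻ z in (fun z : E n => z + c) ⁻¹' S3, (ENNReal.ofReal ‖z‖) ^ (-(a+b)) :=
                  lint_translate c (fun z : E n => (ENNReal.ofReal ‖z‖) ^ (-(a+b))) S3
              _ = ∫⁻ z in (ball (0 : E n) (2*d))ᶜ, (ENNReal.ofReal ‖z‖) ^ (-(a+b)) := by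
                  rw [hS3, Set.preimage_compl, preim_ball]
          rw [htr]
          exact HB (2*d) (by positivity)
  -- combine
  have hsplit : (∫⁻ y, f y) ≤ (∫⁻ y in S1, f y) + ((∫⁻ y in S2, f y) + (∫⁻ y in S3, f y)) := by
    calc (∫⁻ y, f y) = ∫⁻ y in Set.univ, f y := (setLIntegral_univ f).symm
      _ ≤ ∫⁻ y in S1 ∪ (S2 ∪ S3), f y := lintegral_mono_set hcover
      _ ≤ (∫⁻ y in S1, f y) + ∫⁻ y in S2 ∪ S3, f y := lintegral_union_le _ _ _
      _ ≤ (∫⁻ y in S1, f y) + ((∫⁻ y in S2, f y) + (∫⁻ y in S3, f y)) := by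
          gcongr
          exact lintegral_union_le _ _ _
  -- real exponent computations
  have h2pos : (0:ℝ) < 2 := two_pos
  have hhalf : (0:ℝ) < d/2 := by positivity
  have e1 : -b + ((n:ℝ) - a) = E0 := by rw [hE0]; ring
  have e2 : -E0 = a + b - (n:ℝ) := by rw [hE0]; ring
  have r1 : (d/2) ^ (-b) * (d/2) ^ ((n:ℝ) - a) = 2 ^ (a + b - (n:ℝ)) * d ^ E0 := by
    rw [← Real.rpow_add hhalf, e1, Real.div_rpow hd0.le h2pos.le, div_eq_mul_inv,
        ← Real.rpow_neg h2pos.le, e2, mul_comm]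
  have m1 : d ^ (-a) * d ^ ((n:ℝ)-b) = d ^ E0 := by
    rw [← Real.rpow_add hd0]; congr 1; rw [hE0]; ring
  have m2 : (2:ℝ) ^ (-(-a)) * 2 ^ ((n:ℝ)-b) = 2 ^ (a + ((n:ℝ)-b)) := by
    rw [← Real.rpow_add h2pos, neg_neg]
  have r2 : (d/2) ^ (-a) * (2*d) ^ ((n:ℝ)-b) = 2 ^ (a + ((n:ℝ)-b)) * d ^ E0 := by
    calc (d/2) ^ (-a) * (2*d) ^ ((n:ℝ)-b)
        = (d ^ (-a) * ((2:ℝ) ^ (-a))⁻¹) * ((2:ℝ) ^ ((n:ℝ)-b) * d ^ ((n:ℝ)-b)) := by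
          rw [Real.div_rpow hd0.le h2pos.le, Real.mul_rpow h2pos.le hd0.le, div_eq_mul_inv]
      _ = (d ^ (-a) * d ^ ((n:ℝ)-b)) * ((2:ℝ) ^ (-(-a)) * 2 ^ ((n:ℝ)-b)) := by
          rw [← Real.rpow_neg h2pos.le]; ring
      _ = 2 ^ (a + ((n:ℝ)-b)) * d ^ E0 := by rw [m1, m2]; ring
  have m3 : d ^ ((n:ℝ)-(a+b)) = d ^ E0 := by congr 1; rw [hE0]; ring
  have r3 : (2:ℝ) ^ a * (2*d) ^ ((n:ℝ)-(a+b)) = 2 ^ (a + ((n:ℝ)-(a+b))) * d ^ E0 := by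
    rw [Real.mul_rpow h2pos.le hd0.le, ← mul_assoc, ← Real.rpow_add h2pos, m3]
  -- comparisons of powers of 2
  have hcmp : ∀ u : ℝ, u ≤ a + b + (n:ℝ) →
      (2:ℝ) ^ u ≤ 2 ^ (a + b - (n:ℝ)) * 2 ^ (2*(n:ℝ)) := by
    intro u hu
    rw [← Real.rpow_add h2pos]
    exact Real.rpow_le_rpow_of_exponent_le one_le_two (by linarith)
  have hdE0 : (0:ℝ) ≤ d ^ E0 := Real.rpow_nonneg hd0.le _
  -- assemble
  have hU1 : ENNReal.ofReal ((d/2) ^ (-b)) * (K1 * ENNReal.ofReal ((d/2) ^ ((n:ℝ) - a))) =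
      ENNReal.ofReal ((2:ℝ) ^ (a + b - (n:ℝ))) * K1 * ENNReal.ofReal (d ^ E0) := by
    rw [mul_comm (ENNReal.ofReal _) (K1 * _), mul_assoc, ← ENNReal.ofReal_mul
      (Real.rpow_nonneg hhalf.le _), mul_comm ((d/2) ^ ((n:ℝ)-a)) _, r1,
      ENNReal.ofReal_mul (Real.rpow_nonneg h2pos.le _)]
    ring
  have hU2 : ENNReal.ofReal ((d/2) ^ (-a)) * (K2 * ENNReal.ofReal ((2*d) ^ ((n:ℝ) - b))) ≤
      ENNReal.ofReal ((2:ℝ) ^ (a + b - (n:ℝ))) * (K2 * Q) * ENNReal.ofReal (d ^ E0) := by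
    have : ENNReal.ofReal ((d/2) ^ (-a)) * (K2 * ENNReal.ofReal ((2*d) ^ ((n:ℝ) - b))) =
        K2 * ENNReal.ofReal ((2:ℝ) ^ (a + ((n:ℝ)-b)) * d ^ E0) := by
      rw [← r2, ENNReal.ofReal_mul (Real.rpow_nonneg hhalf.le _)]
      ring
    rw [this, hQ]
    calc K2 * ENNReal.ofReal ((2:ℝ) ^ (a + ((n:ℝ)-b)) * d ^ E0)
        ≤ K2 * ENNReal.ofReal (((2:ℝ) ^ (a + b - (n:ℝ)) * 2 ^ (2*(n:ℝ))) * d ^ E0) := by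
          gcongr
          exact hcmp (a + ((n:ℝ)-b)) (by linarith)
      _ = ENNReal.ofReal ((2:ℝ) ^ (a + b - (n:ℝ))) *
            (K2 * ENNReal.ofReal ((2:ℝ) ^ (2*(n:ℝ)))) * ENNReal.ofReal (d ^ E0) := by
          rw [ENNReal.ofReal_mul (by positivity), ENNReal.ofReal_mul (by positivity)]
          ring
  have hU3 : ENNReal.ofReal ((2:ℝ) ^ a) * (K3 * ENNReal.ofReal ((2*d) ^ ((n:ℝ) - (a+b)))) ≤
      ENNReal.ofReal ((2:ℝ) ^ (a + b - (n:ℝ))) * (K3 * Q) * ENNReal.ofReal (d ^ E0) := by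
    have : ENNReal.ofReal ((2:ℝ) ^ a) * (K3 * ENNReal.ofReal ((2*d) ^ ((n:ℝ) - (a+b)))) =
        K3 * ENNReal.ofReal ((2:ℝ) ^ (a + ((n:ℝ)-(a+b))) * d ^ E0) := by
      rw [← r3, ENNReal.ofReal_mul (Real.rpow_nonneg h2pos.le _)]
      ring
    rw [this, hQ]
    calc K3 * ENNReal.ofReal ((2:ℝ) ^ (a + ((n:ℝ)-(a+b))) * d ^ E0)
        ≤ K3 * ENNReal.ofReal (((2:ℝ) ^ (a + b - (n:ℝ)) * 2 ^ (2*(n:ℝ))) * d ^ E0) := by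
          gcongr
          exact hcmp (a + ((n:ℝ)-(a+b))) (by linarith)
      _ = ENNReal.ofReal ((2:ℝ) ^ (a + b - (n:ℝ))) *
            (K3 * ENNReal.ofReal ((2:ℝ) ^ (2*(n:ℝ)))) * ENNReal.ofReal (d ^ E0) := by
          rw [ENNReal.ofReal_mul (by positivity), ENNReal.ofReal_mul (by positivity)]
          ring
  calc (∫⁻ y, f y) ≤ (∫⁻ y in S1, f y) + ((∫⁻ y in S2, f y) + (∫⁻ y in S3, f y)) := hsplit
    _ ≤ (ENNReal.ofReal ((2:ℝ) ^ (a + b - (n:ℝ))) * K1 * ENNReal.ofReal (d ^ E0)) +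
        ((ENNReal.ofReal ((2:ℝ) ^ (a + b - (n:ℝ))) * (K2 * Q) * ENNReal.ofReal (d ^ E0)) +
         (ENNReal.ofReal ((2:ℝ) ^ (a + b - (n:ℝ))) * (K3 * Q) * ENNReal.ofReal (d ^ E0))) := by
        gcongr
        · exact bound1.trans (le_of_eq hU1)
        · exact bound2.trans hU2
        · exact bound3.trans hU3
    _ = c1 * ENNReal.ofReal (d ^ E0) := by rw [hc1]; ring

/-- for `δ < α̃ − n/r`, `α̃ − n/r − δ < θ < n/r'` and
`β = θ + δ + n/r − α̃`, the pair `v(x) = |x|^(−θ)`, `w(x) = |x|^(−β)` belongs to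
`H(r, α̃, δ)`. -/
theorem statement9 (n m : ℕ) (α δ αt θ βe : ℝ) (r r' : ℝ≥0∞)
    (hn : 1 ≤ n) (hα0 : 0 ≤ α) (hαn : α < (n : ℝ)) (hδ0 : 0 < δ) (hδ1 : δ < 1)
    (hmδ : (m : ℝ) * δ < (n : ℝ) - α) (hαt : αt = (m : ℝ) * δ + α)
    (hr : 1 ≤ r) (hconj : r⁻¹ + r'⁻¹ = 1)
    (hδr : δ < αt - (n : ℝ) * r⁻¹.toReal)
    (hθ1 : αt - (n : ℝ) * r⁻¹.toReal - δ < θ) (hθ2 : θ < (n : ℝ) * r'⁻¹.toReal)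
    (hβ : βe = θ + δ + (n : ℝ) * r⁻¹.toReal - αt)
    (v w : E n → ℝ≥0∞)
    (hv : v = fun x => (ENNReal.ofReal ‖x‖) ^ (-θ))
    (hw : w = fun x => (ENNReal.ofReal ‖x‖) ^ (-βe)) :
    ∃ C : ℝ≥0, Hclass n r' αt δ δ v w (C : ℝ≥0∞) := by
  have hnR : (0:ℝ) < n := by exact_mod_cast hn
  have hαtn : αt < (n:ℝ) := by rw [hαt]; linarith
  -- conjugate exponent bookkeeping
  set u : ℝ := r⁻¹.toReal with hu
  set u' : ℝ := r'⁻¹.toReal with hu'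
  have hrne : r ≠ 0 := (lt_of_lt_of_le one_pos hr).ne'
  have hfin1 : r⁻¹ ≠ ⊤ := ENNReal.inv_ne_top.mpr hrne
  have hr'inv1 : r'⁻¹ ≤ 1 := le_trans le_add_self hconj.le
  have hr'1 : 1 ≤ r' := ENNReal.inv_le_one.mp hr'inv1
  have hr'0 : r' ≠ 0 := (lt_of_lt_of_le one_pos hr'1).ne'
  have hfin2 : r'⁻¹ ≠ ⊤ := ENNReal.inv_ne_top.mpr hr'0
  have huu' : u + u' = 1 := by
    have := congrArg ENNReal.toReal hconj
    rwa [ENNReal.toReal_add hfin1 hfin2, ENNReal.toReal_one] at this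
  have hθpos : 0 < θ := lt_of_le_of_lt (by linarith) hθ1
  have hu'pos : 0 < u' := by
    have h0 : 0 < (n:ℝ) * u' := lt_trans hθpos hθ2
    rcases mul_pos_iff.mp h0 with ⟨_, h⟩ | ⟨h, _⟩
    · exact h
    · linarith
  have hr'top : r' ≠ ⊤ := by
    intro h
    rw [hu', h] at hu'pos
    simp at hu'pos
  set s : ℝ := r'.toReal with hs
  have hs0 : 0 < s := ENNReal.toReal_pos hr'0 hr'top
  have hsu' : u' * s = 1 := by
    rw [hu', hs, ENNReal.toReal_inv]
    exact inv_mul_cancel₀ (ENNReal.toReal_pos hr'0 hr'top).ne'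
  -- exponents
  set a : ℝ := θ * s with ha_def
  set b : ℝ := ((n:ℝ) - αt + δ) * s with hb_def
  have hnu : (n:ℝ) * u = (n:ℝ) - (n:ℝ) * u' := by
    rw [show u = 1 - u' by linarith]; ring
  have ha : 0 < a := by positivity
  have han : a < n := by
    have h := mul_lt_mul_of_pos_right hθ2 hs0
    rw [mul_assoc, hsu', mul_one] at h
    exact h
  have hb : 0 < b := by
    have : 0 < (n:ℝ) - αt + δ := by linarith
    positivity
  have hbn : b < n := by
    have h5 : (n:ℝ) - αt + δ < (n:ℝ) * u' := by linarith
    have h := mul_lt_mul_of_pos_right h5 hs0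
    rw [mul_assoc, hsu', mul_one] at h
    exact h
  have hab : (n:ℝ) < a + b := by
    have h6 : (n:ℝ) * u' < θ + ((n:ℝ) - αt + δ) := by linarith
    have h7 := mul_lt_mul_of_pos_right h6 hs0
    rw [mul_assoc, hsu', mul_one] at h7
    have h8 : (θ + ((n:ℝ) - αt + δ)) * s = a + b := by rw [ha_def, hb_def]; ring
    linarith
  have hE0 : (n:ℝ) - a - b = -(βe * s) := by
    rw [hβ, ha_def, hb_def]
    linear_combination (n:ℝ) * s * huu' - (n:ℝ) * hsu'
  have hβpos : 0 < βe := by rw [hβ]; linarith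
  -- volume constant
  set ν : ℝ≥0∞ := volume (ball (0 : E n) 1) with hν
  have hνfin : ν ≠ ⊤ := measure_ball_lt_top.ne
  have hν0 : ν ≠ 0 := (measure_ball_pos _ _ one_pos).ne'
  set κ : ℝ := (ν ^ ((1:ℝ)/(n:ℝ))).toReal with hκ
  have hκtop : ν ^ ((1:ℝ)/(n:ℝ)) ≠ ⊤ :=
    ENNReal.rpow_ne_top_of_nonneg (by positivity) hνfin
  have hκpos : 0 < κ := by
    rw [hκ]
    exact ENNReal.toReal_pos (by
      simp only [ne_eq, ENNReal.rpow_eq_zero_iff, not_or]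
      constructor
      · rintro ⟨h, -⟩; exact hν0 h
      · rintro ⟨h, -⟩; exact hνfin h) hκtop
  have hκofReal : ν ^ ((1:ℝ)/(n:ℝ)) = ENNReal.ofReal κ := by
    rw [hκ, ENNReal.ofReal_toReal hκtop]
  obtain ⟨K, hKtop, HK⟩ := lintC hn ha han hb hbn hab
  set M : ℝ := max 1 κ⁻¹ with hM
  set C0 : ℝ≥0∞ := (ENNReal.ofReal M) ^ βe * K ^ (1/s) with hC0
  have hC0top : C0 ≠ ⊤ := by
    rw [hC0]
    exact ENNReal.mul_ne_top
      (ENNReal.rpow_ne_top_of_nonneg hβpos.le ENNReal.ofReal_ne_top)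
      (ENNReal.rpow_ne_top_of_nonneg (by positivity) hKtop)
  refine ⟨C0.toNNReal, ?_⟩
  intro c R hR
  rw [ENNReal.coe_toNNReal hC0top]
  set e : ℝ := κ * R with he_def
  have he : 0 < e := by positivity
  set d : ℝ := e + ‖c‖ with hd
  have hd0 : 0 < d := by positivity
  set D : ℝ≥0∞ := ENNReal.ofReal d with hD
  have hD0 : D ≠ 0 := by
    rw [hD]; simpa using hd0
  have hDtop : D ≠ ⊤ := ENNReal.ofReal_ne_top
  -- volume of the ball, root
  have hvol : volume (ball c R) = ENNReal.ofReal (R ^ n) * ν := vol_ball hn c hR.le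
  have hvol13 : volume (ball c R) ^ ((1:ℝ)/(n:ℝ)) = ENNReal.ofReal e := by
    rw [hvol, ENNReal.mul_rpow_of_nonneg _ _ (by positivity), hκofReal,
        ENNReal.ofReal_pow hR.le, ← ENNReal.rpow_natCast (ENNReal.ofReal R) n,
        ← ENNReal.rpow_mul, mul_one_div, div_self hnR.ne', ENNReal.rpow_one,
        he_def, ENNReal.ofReal_mul hκpos.le]
    ring
  -- middle factor is 1
  simp only [sub_self, zero_div, ENNReal.rpow_zero, mul_one]
  -- essSup bound
  have hess : essSup (fun y => (w y)⁻¹) (volume.restrict (ball c R)) ≤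
      (ENNReal.ofReal M) ^ βe * D ^ βe := by
    refine essSup_le_of_ae_le _ ((ae_restrict_iff' measurableSet_ball).mpr
      (ae_of_all _ fun y hy => ?_))
    have h1 : ‖y‖ ≤ ‖c‖ + R := by
      have h2 : dist y c < R := mem_ball.mp hy
      have h3 : ‖y‖ ≤ ‖c‖ + dist y c := by
        rw [dist_eq_norm]
        calc ‖y‖ = ‖c + (y - c)‖ := by congr 1; abel
          _ ≤ ‖c‖ + ‖y - c‖ := norm_add_le _ _
      linarith
    have h4 : ‖c‖ + R ≤ M * d := by
      have hM1 : 1 ≤ M := le_max_left _ _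
      have hM2 : κ⁻¹ ≤ M := le_max_right _ _
      have hre : R = κ⁻¹ * e := by rw [he_def]; field_simp
      have hc0 : 0 ≤ ‖c‖ := norm_nonneg c
      calc ‖c‖ + R = ‖c‖ + κ⁻¹ * e := by rw [hre]
        _ ≤ M * ‖c‖ + M * e := add_le_add (le_mul_of_one_le_left hc0 hM1)
            (mul_le_mul_of_nonneg_right hM2 he.le)
        _ = M * d := by rw [hd]; ring
    rw [hw]
    simp only [ENNReal.rpow_neg, inv_inv]
    calc (ENNReal.ofReal ‖y‖) ^ βe ≤ (ENNReal.ofReal (M * d)) ^ βe := by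
          exact ENNReal.rpow_le_rpow (ENNReal.ofReal_le_ofReal (by linarith)) hβpos.le
      _ = (ENNReal.ofReal M) ^ βe * D ^ βe := by
          rw [ENNReal.ofReal_mul (by positivity), hD,
            ENNReal.mul_rpow_of_nonneg _ _ hβpos.le]
  -- eN bound
  have heN : eN r' (fun y =>
      v y * (volume (ball c R) ^ ((1 : ℝ) / (n : ℝ)) +
        ENNReal.ofReal (dist c y)) ^ (-((n : ℝ) - αt + δ))) volume ≤
      K ^ (1/s) * D ^ (-βe) := by
    rw [eN, if_neg hr'top]
    have hint : (∫⁻ y, ((fun y =>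
        v y * (volume (ball c R) ^ ((1 : ℝ) / (n : ℝ)) +
          ENNReal.ofReal (dist c y)) ^ (-((n : ℝ) - αt + δ))) y) ^ r'.toReal) =
        ∫⁻ y, (ENNReal.ofReal ‖y‖) ^ (-a) * (ENNReal.ofReal (e + dist c y)) ^ (-b) := by
      refine lintegral_congr fun y => ?_
      simp only [hv, hvol13]
      rw [← ENNReal.ofReal_add he.le dist_nonneg,
        ENNReal.mul_rpow_of_nonneg _ _ hs0.le,
        ← ENNReal.rpow_mul, ← ENNReal.rpow_mul]
      rw [show -θ * s = -a by rw [ha_def]; ring,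
          show -((n:ℝ) - αt + δ) * s = -b by rw [hb_def]; ring]
    rw [hint]
    calc (∫⁻ y, (ENNReal.ofReal ‖y‖) ^ (-a) *
          (ENNReal.ofReal (e + dist c y)) ^ (-b)) ^ (1/r'.toReal)
        ≤ (K * ENNReal.ofReal (d ^ ((n:ℝ) - a - b))) ^ (1/s) :=
          ENNReal.rpow_le_rpow (HK c e he) (by positivity)
      _ = K ^ (1/s) * D ^ (-βe) := by
          rw [ENNReal.mul_rpow_of_nonneg _ _ (by positivity), hD,
            ← ENNReal.ofReal_rpow_of_pos hd0, ← ENNReal.rpow_mul, hE0]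
          have hexp : -(βe * s) * (1/s) = -βe := by field_simp
          rw [hexp]
  -- combine
  calc essSup (fun y => (w y)⁻¹) (volume.restrict (ball c R)) *
        eN r' (fun y =>
          v y * (volume (ball c R) ^ ((1 : ℝ) / (n : ℝ)) +
            ENNReal.ofReal (dist c y)) ^ (-((n : ℝ) - αt + δ))) volume
      ≤ ((ENNReal.ofReal M) ^ βe * D ^ βe) * (K ^ (1/s) * D ^ (-βe)) :=
        mul_le_mul' hess heN
    _ = C0 * (D ^ βe * D ^ (-βe)) := by rw [hC0]; ring
    _ = C0 := by
        rw [← ENNReal.rpow_add βe (-βe) hD0 hDtop, add_neg_cancel, ENNReal.rpow_zero, mul_one]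
end
end

section
/- Let n ≥ 1, m ∈ ℕ ∪ {0}, 0 ≤ α < n, 0 < δ < 1 with mδ < n − α, α̃ = mδ + α, and let 1 ≤ r ≤ ∞ and δ̃ satisfy α̃ − n < δ̃ ≤ α̃ − n/r < δ (with n/∞ = 0). Set θ = α̃ − n/r − δ̃ (so 0 ≤ θ < n/r'). Then the pair of weights (v,w) given by v(x) = |x|^(−θ) and w ≡ 1 belongs to the class H(r, α̃, δ̃). -/
open MeasureTheory Metric ENNReal NNReal

noncomputable section

lemma rpow_neg_anti {x y : ℝ≥0∞} {b : ℝ} (h : x ≤ y) (hb : 0 ≤ b) :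
    y ^ (-b) ≤ x ^ (-b) := by
  rw [ENNReal.rpow_neg, ENNReal.rpow_neg]
  exact ENNReal.inv_le_inv.2 (ENNReal.rpow_le_rpow h hb)

lemma ofReal_pow_mul {t s : ℝ} (ht : 0 ≤ t) (hs : 0 ≤ s) (k : ℕ) :
    ENNReal.ofReal (t ^ k * s) = (ENNReal.ofReal t) ^ (k : ℝ) * ENNReal.ofReal s := by
  rw [ENNReal.ofReal_mul (by positivity), ENNReal.ofReal_pow ht, ENNReal.rpow_natCast]

-- global bound

lemma global_bound (n : ℕ) (hn : 1 ≤ n) (b : ℝ) (hb : (n : ℝ) < b) :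
    ∃ C : ℝ≥0∞, C ≠ ∞ ∧ ∀ s : ℝ, 0 < s → ∀ c : E n,
      (∫⁻ y, (ENNReal.ofReal s + ENNReal.ofReal (dist c y)) ^ (-b)) ≤
        C * (ENNReal.ofReal s) ^ ((n : ℝ) - b) := by
  haveI : Nontrivial (E n) := by
    have h : Module.finrank ℝ (E n) = n := finrank_euclideanSpace_fin
    exact Module.nontrivial_of_finrank_pos (R := ℝ) (by omega : 0 < Module.finrank ℝ (E n))
  have hb0 : (0 : ℝ) ≤ b := le_trans (by positivity) hb.le
  set ω : ℝ≥0∞ := volume (ball (0 : E n) 1) with hω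
  have hωtop : ω ≠ ∞ := measure_ball_lt_top.ne
  set q : ℝ≥0∞ := (2 : ℝ≥0∞) ^ (-(b - (n : ℝ))) with hqdef
  have hq1 : q < 1 := ENNReal.rpow_lt_one_of_one_lt_of_neg (by norm_num) (by linarith)
  refine ⟨ω + ω * (2 : ℝ≥0∞) ^ ((n : ℝ)) * (1 - q)⁻¹, ?_, ?_⟩
  · refine ENNReal.add_ne_top.2 ⟨hωtop, ?_⟩
    apply ENNReal.mul_ne_top (ENNReal.mul_ne_top hωtop (by simp))
    simp [tsub_eq_zero_iff_le, not_le, hq1]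
  intro s hs c
  set S : ℝ≥0∞ := ENNReal.ofReal s with hSdef
  have hS0 : S ≠ 0 := by simp [hSdef, hs, ENNReal.ofReal_eq_zero, not_le, hs]
  have hStop : S ≠ ∞ := ENNReal.ofReal_ne_top
  -- translate
  have htrans : (∫⁻ y, (S + ENNReal.ofReal (dist c y)) ^ (-b)) =
      ∫⁻ z : E n, (S + ENNReal.ofReal ‖z‖) ^ (-b) := by
    have : ∀ y : E n, dist c y = ‖y + -c‖ := by
      intro y; rw [dist_comm, dist_eq_norm, sub_eq_add_neg]
    simp_rw [this]
    exact lintegral_add_right_eq_self (fun z => (S + ENNReal.ofReal ‖z‖) ^ (-b)) (-c)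
  rw [htrans]
  -- split
  rw [← lintegral_add_compl (fun z => (S + ENNReal.ofReal ‖z‖) ^ (-b)) measurableSet_ball
    (A := ball (0 : E n) s)]
  have hball : (∫⁻ z in ball (0 : E n) s, (S + ENNReal.ofReal ‖z‖) ^ (-b)) ≤
      ω * S ^ ((n : ℝ) - b) := by
    calc (∫⁻ z in ball (0 : E n) s, (S + ENNReal.ofReal ‖z‖) ^ (-b))
        ≤ ∫⁻ _ in ball (0 : E n) s, S ^ (-b) := by
          refine setLIntegral_mono measurable_const (fun z _ => ?_)
          exact rpow_neg_anti le_self_add hb0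
      _ = S ^ (-b) * volume (ball (0 : E n) s) := setLIntegral_const _ _
      _ = S ^ (-b) * (ENNReal.ofReal (s ^ n) * ω) := by
          rw [Measure.addHaar_ball volume (0 : E n) hs.le, finrank_euclideanSpace_fin]
      _ = ω * S ^ ((n : ℝ) - b) := by
          rw [ENNReal.ofReal_pow hs.le, ← ENNReal.rpow_natCast (ENNReal.ofReal s) n,
            ← hSdef, show (n : ℝ) - b = -b + (n : ℝ) by ring,
            ENNReal.rpow_add _ _ hS0 hStop]
          ring
  have houter : (∫⁻ z in (ball (0 : E n) s)ᶜ, (S + ENNReal.ofReal ‖z‖) ^ (-b)) ≤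
      ω * (2 : ℝ≥0∞) ^ ((n : ℝ)) * (1 - q)⁻¹ * S ^ ((n : ℝ) - b) := by
    set A : ℕ → Set (E n) := fun k =>
      closedBall (0 : E n) (2 ^ (k + 1) * s) \ ball (0 : E n) (2 ^ k * s) with hA
    have hcover : (ball (0 : E n) s)ᶜ ⊆ ⋃ k, A k := by
      intro z hz
      rw [Set.mem_compl_iff, mem_ball_zero_iff, not_lt] at hz
      obtain ⟨k, hk1, hk2⟩ := exists_nat_pow_near
        (x := ‖z‖ / s) (y := (2:ℝ)) ((one_le_div hs).2 hz) one_lt_two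
      refine Set.mem_iUnion.2 ⟨k, ?_, ?_⟩
      · rw [mem_closedBall_zero_iff]
        calc ‖z‖ = (‖z‖ / s) * s := by field_simp
          _ ≤ 2 ^ (k + 1) * s := by nlinarith [hk2.le, hs.le]
      · rw [mem_ball_zero_iff, not_lt]
        calc (2:ℝ) ^ k * s ≤ (‖z‖ / s) * s := by nlinarith [hs.le]
          _ = ‖z‖ := by field_simp
    calc (∫⁻ z in (ball (0 : E n) s)ᶜ, (S + ENNReal.ofReal ‖z‖) ^ (-b))
        ≤ ∫⁻ z in ⋃ k, A k, (S + ENNReal.ofReal ‖z‖) ^ (-b) :=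
          lintegral_mono_set hcover
      _ ≤ ∑' k, ∫⁻ z in A k, (S + ENNReal.ofReal ‖z‖) ^ (-b) :=
          lintegral_iUnion_le _ _
      _ ≤ ∑' k, ω * (2 : ℝ≥0∞) ^ ((n : ℝ)) * S ^ ((n : ℝ) - b) * q ^ k := by
          refine ENNReal.tsum_le_tsum (fun k => ?_)
          have hterm : (∫⁻ z in A k, (S + ENNReal.ofReal ‖z‖) ^ (-b)) ≤
              ((2 : ℝ≥0∞) ^ (k : ℝ) * S) ^ (-b) * volume (A k) := by
            rw [← setLIntegral_const (A k) _]
            refine setLIntegral_mono measurable_const (fun z hz => ?_)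
            refine rpow_neg_anti ?_ hb0
            have h1 : (2:ℝ) ^ k * s ≤ ‖z‖ := by
              have := hz.2; rwa [mem_ball_zero_iff, not_lt] at this
            calc (2 : ℝ≥0∞) ^ (k : ℝ) * S = ENNReal.ofReal (2 ^ k * s) := by
                  rw [ofReal_pow_mul (by norm_num) hs.le k]; norm_num; rfl
              _ ≤ ENNReal.ofReal ‖z‖ := ENNReal.ofReal_le_ofReal h1
              _ ≤ S + ENNReal.ofReal ‖z‖ := le_add_self
          have hvol : volume (A k) ≤
              (2 : ℝ≥0∞) ^ (((k : ℝ) + 1) * n) * S ^ (n : ℝ) * ω := by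
            calc volume (A k) ≤ volume (closedBall (0 : E n) (2 ^ (k + 1) * s)) :=
                  measure_mono Set.diff_subset
              _ = ENNReal.ofReal ((2 ^ (k + 1) * s) ^ n) * ω := by
                  rw [Measure.addHaar_closedBall volume (0 : E n) (by positivity),
                    finrank_euclideanSpace_fin]
              _ = (2 : ℝ≥0∞) ^ (((k : ℝ) + 1) * n) * S ^ (n : ℝ) * ω := by
                  rw [mul_pow, ← pow_mul, ENNReal.ofReal_mul (by positivity),
                    ENNReal.ofReal_pow (by norm_num), ENNReal.ofReal_pow hs.le,
                    ← ENNReal.rpow_natCast _ ((k+1) * n), ← ENNReal.rpow_natCast _ n]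
                  push_cast
                  norm_num [add_mul, mul_comm]
                  rfl
          calc (∫⁻ z in A k, (S + ENNReal.ofReal ‖z‖) ^ (-b))
              ≤ ((2 : ℝ≥0∞) ^ (k : ℝ) * S) ^ (-b) *
                  ((2 : ℝ≥0∞) ^ (((k : ℝ) + 1) * n) * S ^ (n : ℝ) * ω) :=
                le_trans hterm (mul_le_mul_right hvol _)
            _ = ω * (2 : ℝ≥0∞) ^ ((n : ℝ)) * S ^ ((n : ℝ) - b) * q ^ k := by
                have h2k : ((2 : ℝ≥0∞)) ^ (k : ℝ) ≠ 0 :=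
                  (ENNReal.rpow_pos (by norm_num) (by norm_num)).ne'
                have e1 : ∀ x y : ℝ, (2:ℝ≥0∞) ^ x * (2:ℝ≥0∞) ^ y = 2 ^ (x + y) :=
                  fun x y => (ENNReal.rpow_add x y two_ne_zero (by norm_num)).symm
                have e2 : ∀ x y : ℝ, S ^ x * S ^ y = S ^ (x + y) :=
                  fun x y => (ENNReal.rpow_add x y hS0 hStop).symm
                rw [ENNReal.mul_rpow_of_ne_zero h2k hS0,
                  ← ENNReal.rpow_natCast q k, hqdef,
                  ← ENNReal.rpow_mul (2 : ℝ≥0∞) (k : ℝ) (-b),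
                  ← ENNReal.rpow_mul (2 : ℝ≥0∞) (-(b - (n:ℝ))) (k : ℝ)]
                calc (2:ℝ≥0∞) ^ ((k:ℝ) * -b) * S ^ (-b) *
                      ((2:ℝ≥0∞) ^ (((k : ℝ) + 1) * (n:ℝ)) * S ^ (n : ℝ) * ω)
                    = ((2:ℝ≥0∞) ^ ((k:ℝ) * -b) * (2:ℝ≥0∞) ^ (((k : ℝ) + 1) * (n:ℝ))) *
                      (S ^ (-b) * S ^ (n : ℝ)) * ω := by ring
                  _ = (2:ℝ≥0∞) ^ ((k:ℝ) * -b + ((k : ℝ) + 1) * (n:ℝ)) *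
                      S ^ (-b + (n : ℝ)) * ω := by rw [e1, e2]
                  _ = (2:ℝ≥0∞) ^ ((n:ℝ) + -(b - (n:ℝ)) * (k:ℝ)) *
                      S ^ ((n : ℝ) - b) * ω := by
                        rw [show (k:ℝ) * -b + ((k : ℝ) + 1) * (n:ℝ)
                            = (n:ℝ) + -(b - (n:ℝ)) * (k:ℝ) by ring,
                          show -b + (n : ℝ) = (n:ℝ) - b by ring]
                  _ = ω * (2:ℝ≥0∞) ^ ((n:ℝ)) * S ^ ((n : ℝ) - b) *
                      (2:ℝ≥0∞) ^ (-(b - (n:ℝ)) * (k:ℝ)) := by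
                        rw [ENNReal.rpow_add _ _ two_ne_zero (by norm_num)]; ring
            
      _ = ω * (2 : ℝ≥0∞) ^ ((n : ℝ)) * S ^ ((n : ℝ) - b) * (1 - q)⁻¹ := by
          rw [ENNReal.tsum_mul_left, ENNReal.tsum_geometric]
      _ = ω * (2 : ℝ≥0∞) ^ ((n : ℝ)) * (1 - q)⁻¹ * S ^ ((n : ℝ) - b) := by ring
  calc _ ≤ ω * S ^ ((n : ℝ) - b) +
        ω * (2 : ℝ≥0∞) ^ ((n : ℝ)) * (1 - q)⁻¹ * S ^ ((n : ℝ) - b) :=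
        add_le_add hball houter
    _ = (ω + ω * (2 : ℝ≥0∞) ^ ((n : ℝ)) * (1 - q)⁻¹) * S ^ ((n : ℝ) - b) := by ring

lemma local_bound (n : ℕ) (hn : 1 ≤ n) (a : ℝ) (ha0 : 0 ≤ a) (han : a < n) :
    ∃ C : ℝ≥0∞, C ≠ ∞ ∧ ∀ s : ℝ, 0 < s →
      (∫⁻ y in ball (0 : E n) s, (ENNReal.ofReal ‖y‖) ^ (-a)) ≤
        C * (ENNReal.ofReal s) ^ ((n : ℝ) - a) := by
  haveI : Nontrivial (E n) := by
    have h : Module.finrank ℝ (E n) = n := finrank_euclideanSpace_fin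
    exact Module.nontrivial_of_finrank_pos (R := ℝ) (by omega : 0 < Module.finrank ℝ (E n))
  set ω : ℝ≥0∞ := volume (ball (0 : E n) 1) with hω
  have hωtop : ω ≠ ∞ := measure_ball_lt_top.ne
  set q : ℝ≥0∞ := (2 : ℝ≥0∞) ^ (-((n : ℝ) - a)) with hqdef
  have hq1 : q < 1 := ENNReal.rpow_lt_one_of_one_lt_of_neg (by norm_num) (by linarith)
  have hinv : ∀ x : ℝ, ((2:ℝ≥0∞)⁻¹) ^ x = 2 ^ (-x) := fun x => by
    rw [ENNReal.inv_rpow, ← ENNReal.rpow_neg]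
  have e1 : ∀ x y : ℝ, (2:ℝ≥0∞) ^ x * (2:ℝ≥0∞) ^ y = 2 ^ (x + y) :=
    fun x y => (ENNReal.rpow_add x y two_ne_zero (by norm_num)).symm
  refine ⟨ω * (2 : ℝ≥0∞) ^ a * (1 - q)⁻¹, ?_, ?_⟩
  · apply ENNReal.mul_ne_top (ENNReal.mul_ne_top hωtop (by simp))
    simp [tsub_eq_zero_iff_le, not_le, hq1]
  intro s hs
  set S : ℝ≥0∞ := ENNReal.ofReal s with hSdef
  have hS0 : S ≠ 0 := by simp [hSdef, ENNReal.ofReal_eq_zero, not_le, hs]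
  have hStop : S ≠ ∞ := ENNReal.ofReal_ne_top
  have e2 : ∀ x y : ℝ, S ^ x * S ^ y = S ^ (x + y) :=
    fun x y => (ENNReal.rpow_add x y hS0 hStop).symm
  set A : ℕ → Set (E n) := fun k =>
    closedBall (0 : E n) ((2:ℝ)⁻¹ ^ k * s) \ ball (0 : E n) ((2:ℝ)⁻¹ ^ (k + 1) * s) with hA
  have hcover : ball (0 : E n) s ⊆ {(0 : E n)} ∪ ⋃ k, A k := by
    intro z hz
    rw [mem_ball_zero_iff] at hz
    rcases eq_or_ne z 0 with rfl | hz0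
    · exact Set.mem_union_left _ rfl
    have hz1 : 0 < ‖z‖ := norm_pos_iff.2 hz0
    obtain ⟨k, hk1, hk2⟩ := exists_nat_pow_near
      (x := s / ‖z‖) (y := (2:ℝ)) ((one_le_div hz1).2 hz.le) one_lt_two
    refine Set.mem_union_right _ (Set.mem_iUnion.2 ⟨k, ?_, ?_⟩)
    · rw [mem_closedBall_zero_iff]
      rw [le_div_iff₀ hz1] at hk1
      rw [inv_pow, ← div_eq_inv_mul, le_div_iff₀ (by positivity)]
      linarith
    · rw [mem_ball_zero_iff, not_lt, inv_pow, ← div_eq_inv_mul,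
        div_le_iff₀ (by positivity)]
      rw [div_lt_iff₀ hz1] at hk2
      linarith
  have hsum : ∀ k : ℕ, (∫⁻ z in A k, (ENNReal.ofReal ‖z‖) ^ (-a)) ≤
      ω * (2 : ℝ≥0∞) ^ a * S ^ ((n : ℝ) - a) * q ^ k := by
    intro k
    have hterm : (∫⁻ z in A k, (ENNReal.ofReal ‖z‖) ^ (-a)) ≤
        ((2:ℝ≥0∞) ^ (-(((k:ℝ) + 1))) * S) ^ (-a) * volume (A k) := by
      rw [← setLIntegral_const (A k) _]
      refine setLIntegral_mono measurable_const (fun z hz => ?_)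
      refine rpow_neg_anti ?_ ha0
      have h1 : (2:ℝ)⁻¹ ^ (k + 1) * s ≤ ‖z‖ := by
        have := hz.2; rwa [mem_ball_zero_iff, not_lt] at this
      calc (2 : ℝ≥0∞) ^ (-((k:ℝ) + 1)) * S = ENNReal.ofReal ((2:ℝ)⁻¹ ^ (k + 1) * s) := by
            rw [ofReal_pow_mul (by norm_num) hs.le (k + 1)]
            rw [show ENNReal.ofReal (2:ℝ)⁻¹ = (2:ℝ≥0∞)⁻¹ by
              rw [ENNReal.ofReal_inv_of_pos two_pos]; norm_num]
            rw [hinv]; push_cast; ring_nf; rfl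
        _ ≤ ENNReal.ofReal ‖z‖ := ENNReal.ofReal_le_ofReal h1
    have hvol : volume (A k) ≤ (2 : ℝ≥0∞) ^ (-(k : ℝ) * n) * S ^ (n : ℝ) * ω := by
      calc volume (A k) ≤ volume (closedBall (0 : E n) ((2:ℝ)⁻¹ ^ k * s)) :=
            measure_mono Set.diff_subset
        _ = ENNReal.ofReal (((2:ℝ)⁻¹ ^ k * s) ^ n) * ω := by
            rw [Measure.addHaar_closedBall volume (0 : E n) (by positivity),
              finrank_euclideanSpace_fin]
        _ = (2 : ℝ≥0∞) ^ (-(k : ℝ) * n) * S ^ (n : ℝ) * ω := by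
            rw [mul_pow, ← pow_mul, ENNReal.ofReal_mul (by positivity),
              ENNReal.ofReal_pow (by norm_num), ENNReal.ofReal_pow hs.le,
              ← ENNReal.rpow_natCast _ (k * n), ← ENNReal.rpow_natCast _ n,
              show ENNReal.ofReal (2:ℝ)⁻¹ = (2:ℝ≥0∞)⁻¹ by
                rw [ENNReal.ofReal_inv_of_pos two_pos]; norm_num,
              hinv]
            push_cast
            ring_nf
            rw [← hSdef]; ring
    have h2k : ((2 : ℝ≥0∞)) ^ (-((k:ℝ) + 1)) ≠ 0 :=
      (ENNReal.rpow_pos (by norm_num) (by norm_num)).ne'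
    calc (∫⁻ z in A k, (ENNReal.ofReal ‖z‖) ^ (-a))
        ≤ ((2:ℝ≥0∞) ^ (-((k:ℝ) + 1)) * S) ^ (-a) *
            ((2 : ℝ≥0∞) ^ (-(k : ℝ) * n) * S ^ (n : ℝ) * ω) :=
          le_trans hterm (mul_le_mul_right hvol _)
      _ = ω * (2 : ℝ≥0∞) ^ a * S ^ ((n : ℝ) - a) * q ^ k := by
          rw [ENNReal.mul_rpow_of_ne_zero h2k hS0,
            ← ENNReal.rpow_natCast q k, hqdef,
            ← ENNReal.rpow_mul (2 : ℝ≥0∞) (-((k:ℝ) + 1)) (-a),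
            ← ENNReal.rpow_mul (2 : ℝ≥0∞) (-((n:ℝ) - a)) (k : ℝ)]
          calc (2:ℝ≥0∞) ^ (-((k:ℝ) + 1) * -a) * S ^ (-a) *
                ((2:ℝ≥0∞) ^ (-(k : ℝ) * (n:ℝ)) * S ^ (n : ℝ) * ω)
              = ((2:ℝ≥0∞) ^ (-((k:ℝ) + 1) * -a) * (2:ℝ≥0∞) ^ (-(k : ℝ) * (n:ℝ))) *
                (S ^ (-a) * S ^ (n : ℝ)) * ω := by ring
            _ = (2:ℝ≥0∞) ^ (-((k:ℝ) + 1) * -a + -(k : ℝ) * (n:ℝ)) *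
                S ^ (-a + (n : ℝ)) * ω := by rw [e1, e2]
            _ = (2:ℝ≥0∞) ^ (a + -((n:ℝ) - a) * (k:ℝ)) * S ^ ((n : ℝ) - a) * ω := by
                rw [show -((k:ℝ) + 1) * -a + -(k : ℝ) * (n:ℝ)
                    = a + -((n:ℝ) - a) * (k:ℝ) by ring,
                  show -a + (n : ℝ) = (n:ℝ) - a by ring]
            _ = ω * (2:ℝ≥0∞) ^ a * S ^ ((n : ℝ) - a) *
                (2:ℝ≥0∞) ^ (-((n:ℝ) - a) * (k:ℝ)) := by
                rw [ENNReal.rpow_add _ _ two_ne_zero (by norm_num)]; ring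
  calc (∫⁻ y in ball (0 : E n) s, (ENNReal.ofReal ‖y‖) ^ (-a))
      ≤ ∫⁻ y in {(0 : E n)} ∪ ⋃ k, A k, (ENNReal.ofReal ‖y‖) ^ (-a) :=
        lintegral_mono_set hcover
    _ ≤ (∫⁻ y in {(0 : E n)}, (ENNReal.ofReal ‖y‖) ^ (-a)) +
        ∫⁻ y in ⋃ k, A k, (ENNReal.ofReal ‖y‖) ^ (-a) := lintegral_union_le _ _ _
    _ ≤ 0 + ∑' k, ∫⁻ y in A k, (ENNReal.ofReal ‖y‖) ^ (-a) := by
        refine add_le_add ?_ (lintegral_iUnion_le _ _)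
        rw [setLIntegral_measure_zero _ _ (measure_singleton _)]
    _ ≤ 0 + ∑' k, ω * (2 : ℝ≥0∞) ^ a * S ^ ((n : ℝ) - a) * q ^ k :=
        add_le_add le_rfl (ENNReal.tsum_le_tsum hsum)
    _ = ω * (2 : ℝ≥0∞) ^ a * (1 - q)⁻¹ * S ^ ((n : ℝ) - a) := by
        rw [zero_add, ENNReal.tsum_mul_left, ENNReal.tsum_geometric]; ring

lemma key_bound (n : ℕ) (hn : 1 ≤ n) (a b : ℝ) (ha0 : 0 ≤ a) (han : a < n)
    (hbn : (n : ℝ) < b) :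
    ∃ K : ℝ≥0∞, K ≠ ∞ ∧ ∀ s : ℝ, 0 < s → ∀ c : E n,
      (∫⁻ y, (ENNReal.ofReal ‖y‖) ^ (-a) *
          (ENNReal.ofReal s + ENNReal.ofReal (dist c y)) ^ (-b)) ≤
        K * (ENNReal.ofReal s) ^ ((n : ℝ) - a - b) := by
  have hb0 : (0 : ℝ) ≤ b := le_trans (by positivity) hbn.le
  obtain ⟨C₁, hC₁, hloc⟩ := local_bound n hn a ha0 han
  obtain ⟨C₂, hC₂, hglob⟩ := global_bound n hn b hbn
  refine ⟨C₁ + C₂, ENNReal.add_ne_top.2 ⟨hC₁, hC₂⟩, ?_⟩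
  intro s hs c
  set S : ℝ≥0∞ := ENNReal.ofReal s with hSdef
  have hS0 : S ≠ 0 := by simp [hSdef, ENNReal.ofReal_eq_zero, not_le, hs]
  have hStop : S ≠ ∞ := ENNReal.ofReal_ne_top
  have hSx : ∀ x : ℝ, S ^ x ≠ ∞ := fun x => by
    rcases le_or_gt 0 x with h | h
    · exact ENNReal.rpow_ne_top_of_nonneg h hStop
    · rw [show x = -(-x) by ring, ENNReal.rpow_neg]
      exact ENNReal.inv_ne_top.2 (ENNReal.rpow_pos (hS0.bot_lt) hStop).ne'
  have e2 : ∀ x y : ℝ, S ^ x * S ^ y = S ^ (x + y) :=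
    fun x y => (ENNReal.rpow_add x y hS0 hStop).symm
  set F : E n → ℝ≥0∞ := fun y =>
    (ENNReal.ofReal ‖y‖) ^ (-a) * (S + ENNReal.ofReal (dist c y)) ^ (-b) with hF
  rw [← lintegral_add_compl F measurableSet_ball (A := ball (0 : E n) s)]
  have hball : (∫⁻ y in ball (0 : E n) s, F y) ≤ C₁ * S ^ ((n : ℝ) - a - b) := by
    calc (∫⁻ y in ball (0 : E n) s, F y)
        ≤ ∫⁻ y in ball (0 : E n) s, S ^ (-b) * (ENNReal.ofReal ‖y‖) ^ (-a) := by
          refine setLIntegral_mono (by fun_prop) (fun y _ => ?_)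
          rw [hF, mul_comm]
          exact mul_le_mul_right (rpow_neg_anti le_self_add hb0) _
      _ = S ^ (-b) * ∫⁻ y in ball (0 : E n) s, (ENNReal.ofReal ‖y‖) ^ (-a) :=
          lintegral_const_mul' _ _ (hSx _)
      _ ≤ S ^ (-b) * (C₁ * S ^ ((n : ℝ) - a)) := mul_le_mul_right (hloc s hs) _
      _ = C₁ * S ^ ((n : ℝ) - a - b) := by
          rw [show (n : ℝ) - a - b = -b + ((n:ℝ) - a) by ring, ← e2]; ring
  have houter : (∫⁻ y in (ball (0 : E n) s)ᶜ, F y) ≤ C₂ * S ^ ((n : ℝ) - a - b) := by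
    calc (∫⁻ y in (ball (0 : E n) s)ᶜ, F y)
        ≤ ∫⁻ y in (ball (0 : E n) s)ᶜ,
            S ^ (-a) * (S + ENNReal.ofReal (dist c y)) ^ (-b) := by
          refine setLIntegral_mono (by fun_prop) (fun y hy => ?_)
          rw [hF]
          refine mul_le_mul_left (rpow_neg_anti ?_ ha0) _
          rw [Set.mem_compl_iff, mem_ball_zero_iff, not_lt] at hy
          exact ENNReal.ofReal_le_ofReal hy
      _ = S ^ (-a) * ∫⁻ y in (ball (0 : E n) s)ᶜ,
            (S + ENNReal.ofReal (dist c y)) ^ (-b) := lintegral_const_mul' _ _ (hSx _)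
      _ ≤ S ^ (-a) * ∫⁻ y, (S + ENNReal.ofReal (dist c y)) ^ (-b) :=
          mul_le_mul_right (setLIntegral_le_lintegral _ _) _
      _ ≤ S ^ (-a) * (C₂ * S ^ ((n : ℝ) - b)) := mul_le_mul_right (hglob s hs c) _
      _ = C₂ * S ^ ((n : ℝ) - a - b) := by
          rw [show (n : ℝ) - a - b = -a + ((n:ℝ) - b) by ring, ← e2]; ring
  calc _ ≤ C₁ * S ^ ((n : ℝ) - a - b) + C₂ * S ^ ((n : ℝ) - a - b) :=
        add_le_add hball houter
    _ = (C₁ + C₂) * S ^ ((n : ℝ) - a - b) := by ring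

/-- for `α̃ − n < δ̃ ≤ α̃ − n/r < δ` and `θ = α̃ − n/r − δ̃`, the pair
`v(x) = |x|^(−θ)`, `w ≡ 1` belongs to `H(r, α̃, δ̃)`. -/
theorem statement10 (n m : ℕ) (α δ δt αt θ : ℝ) (r r' : ℝ≥0∞)
    (hn : 1 ≤ n) (hα0 : 0 ≤ α) (hαn : α < (n : ℝ)) (hδ0 : 0 < δ) (hδ1 : δ < 1)
    (hmδ : (m : ℝ) * δ < (n : ℝ) - α) (hαt : αt = (m : ℝ) * δ + α)
    (hr : 1 ≤ r) (hconj : r⁻¹ + r'⁻¹ = 1)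
    (h1 : αt - (n : ℝ) < δt) (h2 : δt ≤ αt - (n : ℝ) * r⁻¹.toReal)
    (h3 : αt - (n : ℝ) * r⁻¹.toReal < δ)
    (hθ : θ = αt - (n : ℝ) * r⁻¹.toReal - δt)
    (v w : E n → ℝ≥0∞)
    (hv : v = fun x => (ENNReal.ofReal ‖x‖) ^ (-θ))
    (hw : w = fun _ => 1) :
    ∃ C : ℝ≥0, Hclass n r' αt δ δt v w (C : ℝ≥0∞) := by
  subst hv hw hθ hαt
  -- conjugate exponent facts
  have hr0 : r ≠ 0 := by intro h; rw [h] at hr; simp at hr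
  have hrne1 : r ≠ 1 := by
    intro h
    rw [h] at h2
    simp only [inv_one, ENNReal.toReal_one, mul_one] at h2
    linarith
  have hr'top : r' ≠ ∞ := by
    intro h
    rw [h] at hconj
    simp only [ENNReal.inv_top, add_zero, ENNReal.inv_eq_one] at hconj
    exact hrne1 hconj
  have hr'0 : r' ≠ 0 := by
    intro h
    rw [h] at hconj
    simp only [ENNReal.inv_zero] at hconj
    rw [add_top] at hconj
    exact ENNReal.top_ne_one hconj
  have hrinvtop : r⁻¹ ≠ ∞ := ENNReal.inv_ne_top.2 hr0
  have hr'invtop : r'⁻¹ ≠ ∞ := ENNReal.inv_ne_top.2 hr'0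
  set ρ : ℝ := r'.toReal with hρdef
  have hρpos : 0 < ρ := ENNReal.toReal_pos hr'0 hr'top
  set u : ℝ := r⁻¹.toReal with hudef
  have hu : u + ρ⁻¹ = 1 := by
    have h := congrArg ENNReal.toReal hconj
    rw [ENNReal.toReal_add hrinvtop hr'invtop, ENNReal.toReal_one] at h
    simp only [hρdef, hudef, ← ENNReal.toReal_inv]
    exact h
  have hu0 : 0 ≤ u := ENNReal.toReal_nonneg
  -- exponents
  set αt := (m : ℝ) * δ + α with hαt
  set θ := αt - (n : ℝ) * u - δt with hθ
  set a : ℝ := θ * ρ with ha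
  set b : ℝ := ((n : ℝ) - αt + δ) * ρ with hb
  have hθ0 : 0 ≤ θ := by rw [hθ]; linarith
  have hinvρ : ρ⁻¹ = 1 - u := by linarith
  have hn0 : (0:ℝ) < n := by exact_mod_cast hn
  have ha0 : 0 ≤ a := mul_nonneg hθ0 hρpos.le
  have han : a < n := by
    have hθlt : θ < (n : ℝ) * ρ⁻¹ := by rw [hinvρ]; rw [hθ]; nlinarith
    calc a = θ * ρ := ha
      _ < ((n : ℝ) * ρ⁻¹) * ρ := by exact mul_lt_mul_of_pos_right hθlt hρpos
      _ = n := by field_simp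
  have hbn : (n : ℝ) < b := by
    have hβ : (n : ℝ) * ρ⁻¹ < (n : ℝ) - αt + δ := by rw [hinvρ]; nlinarith
    calc (n:ℝ) = ((n : ℝ) * ρ⁻¹) * ρ := by field_simp
      _ < ((n : ℝ) - αt + δ) * ρ := by exact mul_lt_mul_of_pos_right hβ hρpos
  obtain ⟨K, hKtop, hK⟩ := key_bound n hn a b ha0 han hbn
  have hK' : K ^ (1/ρ) ≠ ∞ := ENNReal.rpow_ne_top_of_nonneg (by positivity) hKtop
  refine ⟨(K ^ (1/ρ)).toNNReal, ?_⟩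
  intro c R hR
  rw [ENNReal.coe_toNNReal hK']
  -- setup ball quantities
  set V : ℝ≥0∞ := volume (ball c R) with hV
  have hV0 : V ≠ 0 := (measure_ball_pos volume c hR).ne'
  have hVtop : V ≠ ∞ := measure_ball_lt_top.ne
  set T : ℝ≥0∞ := V ^ ((1:ℝ)/(n:ℝ)) with hT
  have hT0 : T ≠ 0 := (ENNReal.rpow_pos hV0.bot_lt hVtop).ne'
  have hTtop : T ≠ ∞ := ENNReal.rpow_ne_top_of_nonneg (by positivity) hVtop
  set s : ℝ := T.toReal with hsdef
  have hs : 0 < s := ENNReal.toReal_pos hT0 hTtop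
  have hTS : T = ENNReal.ofReal s := (ENNReal.ofReal_toReal hTtop).symm
  -- essSup of constant 1
  have hess : essSup (fun _ : E n => ((1:ℝ≥0∞))⁻¹) (volume.restrict (ball c R)) = 1 := by
    rw [inv_one]
    refine essSup_const _ ?_
    intro h
    exact (measure_ball_pos volume c hR).ne' (by rw [← Measure.restrict_eq_zero (s := ball c R)]; exact h)
  rw [hess, one_mul]
  -- unfold eN
  rw [eN, if_neg hr'top]
  have hFeq : ∀ y : E n,
      ((ENNReal.ofReal ‖y‖) ^ (-θ) *
        (T + ENNReal.ofReal (dist c y)) ^ (-((n : ℝ) - αt + δ))) ^ ρ =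
      (ENNReal.ofReal ‖y‖) ^ (-a) *
        (ENNReal.ofReal s + ENNReal.ofReal (dist c y)) ^ (-b) := by
    intro y
    rw [ENNReal.mul_rpow_of_nonneg _ _ hρpos.le,
      ← ENNReal.rpow_mul (ENNReal.ofReal ‖y‖) (-θ) ρ,
      ← ENNReal.rpow_mul _ (-((n : ℝ) - αt + δ)) ρ,
      show -θ * ρ = -a by rw [ha]; ring,
      show -((n : ℝ) - αt + δ) * ρ = -b by rw [hb]; ring, ← hTS]
  have hint : (∫⁻ y : E n,
      ((ENNReal.ofReal ‖y‖) ^ (-θ) *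
        (T + ENNReal.ofReal (dist c y)) ^ (-((n : ℝ) - αt + δ))) ^ ρ) ≤
      K * (ENNReal.ofReal s) ^ ((n : ℝ) - a - b) := by
    calc _ = ∫⁻ y : E n, (ENNReal.ofReal ‖y‖) ^ (-a) *
          (ENNReal.ofReal s + ENNReal.ofReal (dist c y)) ^ (-b) :=
        lintegral_congr hFeq
      _ ≤ K * (ENNReal.ofReal s) ^ ((n : ℝ) - a - b) := hK s hs c
  -- exponent bookkeeping
  have ha' : a * (1/ρ) = θ := by rw [ha]; field_simp
  have hb' : b * (1/ρ) = (n : ℝ) - αt + δ := by rw [hb]; field_simp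
  have hn' : (n : ℝ) * (1/ρ) = (n:ℝ) - (n:ℝ) * u := by rw [one_div, hinvρ]; ring
  have hexp : δ - δt + ((n : ℝ) - a - b) * (1/ρ) = 0 := by
    rw [sub_mul, sub_mul, ha', hb', hn', hθ]; ring
  calc V ^ ((δ - δt) / (n : ℝ)) * (∫⁻ y : E n,
        ((ENNReal.ofReal ‖y‖) ^ (-θ) *
          (T + ENNReal.ofReal (dist c y)) ^ (-((n : ℝ) - αt + δ))) ^ ρ) ^ (1/ρ)
      ≤ V ^ ((δ - δt) / (n : ℝ)) *
          (K * (ENNReal.ofReal s) ^ ((n : ℝ) - a - b)) ^ (1/ρ) :=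
        mul_le_mul_right (ENNReal.rpow_le_rpow hint (by positivity)) _
    _ = K ^ (1/ρ) * (T ^ (δ - δt) * T ^ (((n : ℝ) - a - b) * (1/ρ))) := by
        rw [ENNReal.mul_rpow_of_nonneg _ _ (by positivity : (0:ℝ) ≤ 1/ρ),
          ← hTS, ← ENNReal.rpow_mul T ((n : ℝ) - a - b) (1/ρ),
          show (δ - δt) / (n : ℝ) = (1:ℝ)/(n:ℝ) * (δ - δt) by ring,
          ENNReal.rpow_mul V ((1:ℝ)/(n:ℝ)) (δ - δt), ← hT]
        ring
    _ = K ^ (1/ρ) := by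
        rw [← ENNReal.rpow_add _ _ hT0 hTtop, hexp, ENNReal.rpow_zero, mul_one]
end
end

section
/- Let n ≥ 1, m ∈ ℕ ∪ {0}, 0 ≤ α < n, 0 < δ < 1 with mδ < n − α, α̃ = mδ + α, and assume α̃ > 0 (i.e. m ≥ 1 or α > 0). Let 1 ≤ r ≤ ∞ and δ̃ ≤ δ. Let K_α : ℝⁿ∖{0} → ℝ be a measurable kernel satisfying the size condition S*_α with constant A. Let b ∈ Λ(δ) and let (v,w) be a pair of weights in the class H(r, α̃, δ̃) with constant C_w. Then there is a constant C, depending only on n, m, α, δ, r, δ̃, A and C_w, such that for every ball B and every measurable f with f/v ∈ L^{r}(ℝⁿ): ‖(1/w)χ_B‖_∞ · ∫_B ∫_{2B} |b(x) − b(z)|^m |K_α(x−z)| |f(z)| dz dx ≤ C · ‖b‖_{Λ(δ)}^m · |B|^(1+δ̃/n) · ‖f/v‖_{r}. In particular, ‖(1/w)χ_B‖_∞ · ∫_B |T^m_{α,b}(f χ_{2B})(x)| dx is bounded by the same right-hand side. -/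
open MeasureTheory Metric ENNReal NNReal

noncomputable section

lemma my_rpow_ne_top {x : ℝ≥0∞} (hx0 : x ≠ 0) (hxt : x ≠ ∞) (y : ℝ) : x ^ y ≠ ∞ := by
  simp [ENNReal.rpow_eq_top_iff, hx0, hxt]

lemma my_rpow_ne_zero {x : ℝ≥0∞} (hx0 : x ≠ 0) (hxt : x ≠ ∞) (y : ℝ) : x ^ y ≠ 0 := by
  simp [ENNReal.rpow_eq_zero_iff, hx0, hxt]

lemma hoelder {n : ℕ} (r r' : ℝ≥0∞) (hconj : r⁻¹ + r'⁻¹ = 1)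
    (F G : E n → ℝ≥0∞) (hF : Measurable F) (hG : Measurable G) :
    ∫⁻ z, F z * G z ≤ eN r F volume * eN r' G volume := by
  have hc : r.HolderConjugate r' := ENNReal.holderConjugate_iff.mpr hconj
  rcases eq_or_ne r ∞ with hr | hrtop
  · subst hr
    have hr' : r' = 1 := by
      have := hconj; simp at this; exact this
    subst hr'
    simp only [eN, if_pos rfl, if_neg one_ne_top, ENNReal.toReal_one, ENNReal.rpow_one, one_div,
      inv_one]
    calc ∫⁻ z, F z * G z ≤ ∫⁻ z, essSup F volume * G z := by
          refine lintegral_mono_ae ?_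
          filter_upwards [ae_le_essSup F] with z hz using mul_le_mul_left hz _
      _ = essSup F volume * ∫⁻ z, G z := lintegral_const_mul _ hG
  rcases eq_or_ne r' ∞ with hr' | hrtop'
  · subst hr'
    have hr1 : r = 1 := by
      have := hconj; simp at this; exact this
    subst hr1
    simp only [eN, if_pos rfl, if_neg one_ne_top, ENNReal.toReal_one, ENNReal.rpow_one, one_div,
      inv_one]
    calc ∫⁻ z, F z * G z ≤ ∫⁻ z, F z * essSup G volume := by
          refine lintegral_mono_ae ?_
          filter_upwards [ae_le_essSup G] with z hz using mul_le_mul_right hz _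
      _ = essSup G volume * ∫⁻ z, F z := by
          simp_rw [mul_comm (F _)]; exact lintegral_const_mul _ hF
      _ = (∫⁻ z, F z) * essSup G volume := mul_comm _ _
  · have hr1 : 1 < r := by
      rcases (ENNReal.HolderConjugate.one_le r r').lt_or_eq with h | h
      · exact h
      · exfalso
        rw [← h, inv_one] at hconj
        nth_rewrite 2 [show (1:ℝ≥0∞) = 1 + 0 from (add_zero 1).symm] at hconj
        exact hrtop' (ENNReal.inv_eq_zero.mp ((ENNReal.add_right_inj one_ne_top).mp hconj))
    have hpq : (r.toReal).HolderConjugate (r'.toReal) := by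
      rw [Real.holderConjugate_iff]; constructor
      · exact (ENNReal.toReal_lt_toReal one_ne_top hrtop).mpr hr1 |>.trans_le' (by norm_num)
      · rw [← ENNReal.toReal_inv, ← ENNReal.toReal_inv, ← ENNReal.toReal_add
          (by simp [ENNReal.HolderConjugate.ne_zero r r']) (by simp [ENNReal.HolderConjugate.ne_zero r' r]), hconj, ENNReal.toReal_one]
    have := ENNReal.lintegral_mul_le_Lp_mul_Lq volume hpq hF.aemeasurable hG.aemeasurable
    simpa only [eN, if_neg hrtop, if_neg hrtop', Pi.mul_apply] using this

lemma eN_ae_lt_top {n : ℕ} {p : ℝ≥0∞} (hp : p ≠ 0) {G : E n → ℝ≥0∞}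
    (hG : Measurable G) (h : eN p G volume ≠ ∞) : ∀ᵐ z : E n ∂volume, G z < ∞ := by
  rcases eq_or_ne p ∞ with hptop | hptop
  · subst hptop
    rw [eN, if_pos rfl] at h
    filter_upwards [ae_le_essSup G] with z hz using hz.trans_lt h.lt_top
  · rw [eN, if_neg hptop] at h
    have hpt : 0 < p.toReal := ENNReal.toReal_pos hp hptop
    have hint : ∫⁻ y, G y ^ p.toReal ≠ ∞ := by
      intro h0
      rw [h0] at h
      exact h (ENNReal.top_rpow_of_pos (by positivity))
    filter_upwards [ae_lt_top (hG.pow measurable_const) hint] with z hz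
    by_contra hzt
    rw [not_lt, top_le_iff] at hzt
    rw [hzt, ENNReal.top_rpow_of_pos hpt] at hz
    exact (lt_irrefl _ hz).elim

lemma kernel_bound (n : ℕ) (hn : 1 ≤ n) (αt : ℝ) (hαt : 0 < αt) (hαtn : αt ≤ (n : ℝ)) :
    ∃ c₁ : ℝ≥0∞, c₁ ≠ ∞ ∧ ∀ (z : E n) (ρ : ℝ), 0 < ρ →
      ∫⁻ x in ball z ρ, ENNReal.ofReal (‖x - z‖ ^ (αt - (n : ℝ))) ≤
        c₁ * ENNReal.ofReal (ρ ^ αt) := by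
  haveI : Nontrivial (E n) := by
    apply Module.nontrivial_of_finrank_pos (R := ℝ)
    rw [finrank_euclideanSpace_fin]; omega
  set ω := volume (ball (0 : E n) 1) with hω
  have hωfin : ω ≠ ∞ := measure_ball_lt_top.ne
  have hq1 : (2:ℝ) ^ (-αt) < 1 := Real.rpow_lt_one_of_one_lt_of_neg one_lt_two (by linarith)
  have hq0 : (0:ℝ) ≤ (2:ℝ) ^ (-αt) := Real.rpow_nonneg (by norm_num) _
  refine ⟨ENNReal.ofReal ((2:ℝ) ^ ((n:ℝ) - αt)) * ω *
    (1 - ENNReal.ofReal ((2:ℝ) ^ (-αt)))⁻¹, ?_, ?_⟩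
  · apply ENNReal.mul_ne_top (ENNReal.mul_ne_top ofReal_ne_top hωfin)
    rw [ENNReal.inv_ne_top]
    intro h0
    rw [tsub_eq_zero_iff_le] at h0
    have := (ENNReal.one_le_ofReal).mp h0
    linarith
  intro z ρ hρ
  set S : ℕ → Set (E n) := fun k => ball z (ρ * (2⁻¹:ℝ)^k) \ ball z (ρ * (2⁻¹:ℝ)^(k+1)) with hS
  have hsub : ball z ρ \ {z} ⊆ ⋃ k, S k := by
    intro x hx
    have hdpos : 0 < dist x z := dist_pos.mpr (by simpa using hx.2)
    have hdlt : dist x z < ρ := mem_ball.mp hx.1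
    have hex : ∃ k : ℕ, ρ * (2⁻¹:ℝ)^(k+1) ≤ dist x z := by
      obtain ⟨j, hj⟩ := exists_pow_lt_of_lt_one (div_pos hdpos hρ) (by norm_num : (2⁻¹:ℝ) < 1)
      refine ⟨j, ?_⟩
      have h1 : ρ * (2⁻¹:ℝ)^j < dist x z := by
        rw [lt_div_iff₀ hρ] at hj; linarith [hj]
      have h2 : ρ * (2⁻¹:ℝ)^(j+1) ≤ ρ * (2⁻¹:ℝ)^j := by
        apply mul_le_mul_of_nonneg_left _ hρ.le
        apply pow_le_pow_of_le_one (by norm_num) (by norm_num)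
        omega
      linarith
    set k := Nat.find hex with hk
    have hk1 : ρ * (2⁻¹:ℝ)^(k+1) ≤ dist x z := Nat.find_spec hex
    have hk2 : dist x z < ρ * (2⁻¹:ℝ)^k := by
      rcases Nat.eq_zero_or_pos k with h0 | hpos
      · rw [h0]; simpa using hdlt
      · have h3 := Nat.find_min hex (m := k - 1) (by omega)
        push_neg at h3
        have h4 : dist x z < ρ * (2⁻¹:ℝ)^(k-1+1) := h3
        rwa [Nat.sub_add_cancel hpos] at h4
    exact Set.mem_iUnion.mpr ⟨k, mem_ball.mpr hk2, fun h => absurd (mem_ball.mp h) (not_lt.mpr hk1)⟩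
  have hball : ∀ (r : ℝ), 0 ≤ r → volume (ball z r) = ENNReal.ofReal (r ^ (n:ℝ)) * ω := by
    intro r hr
    rw [Measure.addHaar_ball volume z hr, finrank_euclideanSpace_fin,
      ← Real.rpow_natCast r n]
  have h2 : ∀ j : ℕ, ((2⁻¹:ℝ))^j = (2:ℝ) ^ (-(j:ℝ)) := fun j => by
    rw [inv_pow, ← Real.rpow_natCast 2 j, ← Real.rpow_neg (by norm_num)]
  have key : ∀ k : ℕ, (ρ * (2⁻¹:ℝ)^(k+1)) ^ (αt - (n:ℝ)) * (ρ * (2⁻¹:ℝ)^k) ^ (n:ℝ) =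
      (ρ ^ αt * 2 ^ ((n:ℝ) - αt)) * ((2:ℝ) ^ (-αt))^k := by
    intro k
    rw [h2, h2, ← Real.rpow_natCast ((2:ℝ)^(-αt)) k, ← Real.rpow_mul (by norm_num : (0:ℝ) ≤ 2),
      Real.mul_rpow hρ.le (Real.rpow_nonneg (by norm_num) _),
      Real.mul_rpow hρ.le (Real.rpow_nonneg (by norm_num) _),
      ← Real.rpow_mul (by norm_num : (0:ℝ) ≤ 2), ← Real.rpow_mul (by norm_num : (0:ℝ) ≤ 2)]
    rw [mul_mul_mul_comm, ← Real.rpow_add hρ, ← Real.rpow_add two_pos, mul_assoc,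
      ← Real.rpow_add two_pos]
    congr 1
    · congr 1; push_cast; ring
    · congr 1; push_cast; ring
  calc ∫⁻ x in ball z ρ, ENNReal.ofReal (‖x - z‖ ^ (αt - (n:ℝ)))
      = ∫⁻ x in ball z ρ \ {z}, ENNReal.ofReal (‖x - z‖ ^ (αt - (n:ℝ))) := by
        refine (setLIntegral_congr ?_).symm
        exact (diff_null_ae_eq_self (measure_singleton z))
    _ ≤ ∫⁻ x in ⋃ k, S k, ENNReal.ofReal (‖x - z‖ ^ (αt - (n:ℝ))) := lintegral_mono_set hsub
    _ ≤ ∑' k, ∫⁻ x in S k, ENNReal.ofReal (‖x - z‖ ^ (αt - (n:ℝ))) := lintegral_iUnion_le _ _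
    _ ≤ ∑' k, ENNReal.ofReal ((ρ * (2⁻¹:ℝ)^(k+1)) ^ (αt - (n:ℝ))) *
          volume (ball z (ρ * (2⁻¹:ℝ)^k)) := by
        refine ENNReal.tsum_le_tsum fun k => ?_
        have hkpos : (0:ℝ) < ρ * (2⁻¹:ℝ)^(k+1) := by positivity
        calc ∫⁻ x in S k, ENNReal.ofReal (‖x - z‖ ^ (αt - (n:ℝ)))
            ≤ ∫⁻ _x in S k, ENNReal.ofReal ((ρ * (2⁻¹:ℝ)^(k+1)) ^ (αt - (n:ℝ))) := by
              refine setLIntegral_mono' (measurableSet_ball.diff measurableSet_ball) ?_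
              intro x hx
              apply ENNReal.ofReal_le_ofReal
              rw [← dist_eq_norm]
              exact Real.rpow_le_rpow_of_nonpos hkpos
                (not_lt.mp (fun h => hx.2 (mem_ball.mpr h))) (by linarith)
          _ = ENNReal.ofReal ((ρ * (2⁻¹:ℝ)^(k+1)) ^ (αt - (n:ℝ))) * volume (S k) :=
              setLIntegral_const _ _
          _ ≤ _ := mul_le_mul_right (measure_mono Set.diff_subset) _
    _ = ∑' k, (ENNReal.ofReal (ρ ^ αt * 2 ^ ((n:ℝ) - αt)) *
          ENNReal.ofReal ((2:ℝ) ^ (-αt))^k) * ω := by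
        congr 1; funext k
        rw [hball _ (by positivity), ← mul_assoc, ← ENNReal.ofReal_mul (by positivity), key k,
          ENNReal.ofReal_mul (by positivity), ENNReal.ofReal_pow hq0]
    _ = ENNReal.ofReal (ρ ^ αt * 2 ^ ((n:ℝ) - αt)) * (1 - ENNReal.ofReal ((2:ℝ) ^ (-αt)))⁻¹ * ω := by
        rw [ENNReal.tsum_mul_right, ENNReal.tsum_mul_left, ENNReal.tsum_geometric]
    _ ≤ _ := by
        rw [ENNReal.ofReal_mul (by positivity)]
        ring_nf
        exact le_rfl

/-- local estimate: for `b ∈ Λ(δ)`, `K_α ∈ S*_α` (with `α̃ > 0`) and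
`(v,w) ∈ H(r, α̃, δ̃)`,
`‖(1/w)χ_B‖_∞ ∫_B ∫_{2B} |b(x)−b(z)|^m |K_α(x−z)| |f(z)| dz dx
  ≤ C ‖b‖^m_{Λ(δ)} |B|^(1+δ̃/n) ‖f/v‖_r`, and in particular the same bound holds for
`‖(1/w)χ_B‖_∞ ∫_B |T^m_{α,b}(f χ_{2B})|`. -/
theorem statement12 (n m : ℕ) (α δ δt αt A : ℝ) (r r' : ℝ≥0∞) (Cw : ℝ≥0)
    (hn : 1 ≤ n) (hα0 : 0 ≤ α) (hαn : α < (n : ℝ)) (hδ0 : 0 < δ) (hδ1 : δ < 1)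
    (hmδ : (m : ℝ) * δ < (n : ℝ) - α) (hαt : αt = (m : ℝ) * δ + α) (hαtpos : 0 < αt)
    (hr : 1 ≤ r) (hconj : r⁻¹ + r'⁻¹ = 1) (hδt : δt ≤ δ) (hA : 0 ≤ A) :
    ∃ C : ℝ≥0, 0 < C ∧
      ∀ (K : E n → ℝ), Measurable K → SizeCond n α A K →
      ∀ (b : E n → ℝ) (Cb : ℝ), Measurable b → 0 ≤ Cb → LipDelta δ Cb b →
      ∀ (v w : E n → ℝ≥0∞), Measurable v → Measurable w →
        Hclass n r' αt δ δt v w (Cw : ℝ≥0∞) →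
      ∀ (f : E n → ℝ), Measurable f →
        eN r (fun z => ENNReal.ofReal |f z| * (v z)⁻¹) volume < ∞ →
      ∀ (c : E n) (R : ℝ), 0 < R →
        (essSup (fun y => (w y)⁻¹) (volume.restrict (ball c R)) *
            ∫⁻ x in ball c R, ∫⁻ z in ball c (2 * R),
              ENNReal.ofReal (|b x - b z| ^ m * |K (x - z)| * |f z|)) ≤
          (C : ℝ≥0∞) * (ENNReal.ofReal Cb) ^ m *
            volume (ball c R) ^ (1 + δt / (n : ℝ)) *
            eN r (fun z => ENNReal.ofReal |f z| * (v z)⁻¹) volume ∧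
        (essSup (fun y => (w y)⁻¹) (volume.restrict (ball c R)) *
            ∫⁻ x in ball c R,
              ENNReal.ofReal |∫ z in ball c (2 * R), (b x - b z) ^ m * K (x - z) * f z|) ≤
          (C : ℝ≥0∞) * (ENNReal.ofReal Cb) ^ m *
            volume (ball c R) ^ (1 + δt / (n : ℝ)) *
            eN r (fun z => ENNReal.ofReal |f z| * (v z)⁻¹) volume := by
  have hn' : (0:ℝ) < (n:ℝ) := by exact_mod_cast Nat.pos_of_ne_zero (by omega)
  have hαtn : αt < (n:ℝ) := by rw [hαt]; linarith
  obtain ⟨c₁, hc₁top, hker⟩ := kernel_bound n hn αt hαtpos hαtn.le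
  haveI : Nontrivial (E n) := by
    apply Module.nontrivial_of_finrank_pos (R := ℝ)
    rw [finrank_euclideanSpace_fin]; omega
  set ω := volume (ball (0 : E n) 1) with hωdef
  have hω0 : ω ≠ 0 := (measure_ball_pos volume 0 one_pos).ne'
  have hωt : ω ≠ ∞ := measure_ball_lt_top.ne
  set κ : ℝ≥0∞ := ω ^ ((1:ℝ)/(n:ℝ)) + ENNReal.ofReal 2 with hκdef
  have hκ0 : κ ≠ 0 := by
    intro h
    rw [hκdef, add_eq_zero] at h
    simpa using h.2
  have hκt : κ ≠ ∞ := by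
    rw [hκdef]
    exact ENNReal.add_ne_top.mpr ⟨my_rpow_ne_top hω0 hωt _, ofReal_ne_top⟩
  set T : ℝ≥0∞ := ENNReal.ofReal A * (c₁ * ENNReal.ofReal ((3:ℝ) ^ αt) *
    κ ^ ((n:ℝ) - αt + δ) * ω ^ (-((δ - δt)/(n:ℝ))) * (Cw : ℝ≥0∞) *
    ω ^ (-(1 + δt/(n:ℝ)))) with hTdef
  have hTt : T ≠ ∞ := by
    rw [hTdef]
    apply ENNReal.mul_ne_top ofReal_ne_top
    apply ENNReal.mul_ne_top
    apply ENNReal.mul_ne_top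
    apply ENNReal.mul_ne_top
    apply ENNReal.mul_ne_top
    apply ENNReal.mul_ne_top hc₁top ofReal_ne_top
    · exact my_rpow_ne_top hκ0 hκt _
    · exact my_rpow_ne_top hω0 hωt _
    · exact coe_ne_top
    · exact my_rpow_ne_top hω0 hωt _
  refine ⟨T.toNNReal + 1, by positivity, ?_⟩
  intro K hK hKsize b Cb hb hCb hLip v w hv hw hH f hf hfN c R hR
  have hTC : T ≤ ((T.toNNReal + 1 : ℝ≥0) : ℝ≥0∞) := by
    rw [ENNReal.coe_add, ENNReal.coe_toNNReal hTt, ENNReal.coe_one]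
    exact le_self_add
  have hH' := hH c R hR
  set B := ball c R with hBdef
  set W := essSup (fun y => (w y)⁻¹) (volume.restrict B) with hWdef
  set F := fun z => ENNReal.ofReal |f z| * (v z)⁻¹ with hFdef
  set N := eN r F volume with hNdef
  set g := fun y => (volume B ^ ((1:ℝ)/(n:ℝ)) + ENNReal.ofReal (dist c y)) ^
    (-((n:ℝ) - αt + δ)) with hgdef
  set M := eN r' (fun y => v y * g y) volume with hMdef
  have hFmeas : Measurable F := (ENNReal.measurable_ofReal.comp
    (continuous_abs.measurable.comp hf)).mul hv.inv
  have hgmeas : Measurable g := by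
    apply Measurable.pow _ measurable_const
    exact measurable_const.add (ENNReal.measurable_ofReal.comp
      (measurable_const.dist measurable_id))
  have hmain : W * (∫⁻ x in B, ∫⁻ z in ball c (2*R),
      ENNReal.ofReal (|b x - b z| ^ m * |K (x - z)| * |f z|)) ≤
      ((T.toNNReal + 1 : ℝ≥0) : ℝ≥0∞) * (ENNReal.ofReal Cb) ^ m *
        volume B ^ (1 + δt/(n:ℝ)) * N := by
    rcases eq_or_ne W 0 with hW0 | hW0
    · rw [hW0, zero_mul]; exact bot_le
    have hBvol : volume B = ENNReal.ofReal (R ^ (n:ℝ)) * ω := by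
      rw [hBdef, Measure.addHaar_ball volume c hR.le, finrank_euclideanSpace_fin,
        ← Real.rpow_natCast R n]
    have hB0 : volume B ≠ 0 := by
      rw [hBvol]
      exact mul_ne_zero (ENNReal.ofReal_pos.mpr (by positivity)).ne' hω0
    have hBt : volume B ≠ ∞ := by
      rw [hBvol]; exact ENNReal.mul_ne_top ofReal_ne_top hωt
    have hpow : ∀ s : ℝ, volume B ^ s = ENNReal.ofReal (R ^ ((n:ℝ) * s)) * ω ^ s := by
      intro s
      rw [hBvol, ENNReal.mul_rpow_of_ne_top ofReal_ne_top hωt,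
        ENNReal.ofReal_rpow_of_pos (by positivity), ← Real.rpow_mul hR.le]
    set τ : ℝ≥0∞ := volume B ^ ((1:ℝ)/(n:ℝ)) + ENNReal.ofReal (2*R) with hτdef
    have hτ0 : τ ≠ 0 := by
      intro h
      rw [hτdef, add_eq_zero] at h
      exact my_rpow_ne_zero hB0 hBt _ h.1
    have hτt : τ ≠ ∞ := by
      rw [hτdef]
      exact ENNReal.add_ne_top.mpr ⟨my_rpow_ne_top hB0 hBt _, ofReal_ne_top⟩
    have hP0 : volume B ^ ((δ - δt)/(n:ℝ)) ≠ 0 := my_rpow_ne_zero hB0 hBt _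
    have hPt : volume B ^ ((δ - δt)/(n:ℝ)) ≠ ∞ := my_rpow_ne_top hB0 hBt _
    -- M is finite
    have hMt : M ≠ ∞ := by
      intro h
      rw [h] at hH'
      rw [ENNReal.mul_top (mul_ne_zero hW0 hP0)] at hH'
      exact (lt_irrefl _ (hH'.trans_lt coe_lt_top)).elim
    -- a.e. facts
    have hg0 : ∀ y, g y ≠ 0 := fun y => by
      apply my_rpow_ne_zero _ _
      · intro h
        rw [add_eq_zero] at h
        exact my_rpow_ne_zero hB0 hBt _ h.1
      · exact ENNReal.add_ne_top.mpr ⟨my_rpow_ne_top hB0 hBt _, ofReal_ne_top⟩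
    have hvfin : ∀ᵐ z : E n ∂volume, v z ≠ ∞ := by
      have hvg := eN_ae_lt_top (n := n) (p := r') (@ENNReal.HolderConjugate.ne_zero r' r (ENNReal.HolderConjugate.symm (hpq := ENNReal.holderConjugate_iff.mpr hconj)))
        (hv.mul hgmeas) hMt
      filter_upwards [hvg] with z hz
      intro hvz
      rw [Pi.mul_apply, hvz, ENNReal.top_mul (hg0 z)] at hz
      exact (lt_irrefl _ hz).elim
    have hfv : ∀ᵐ z : E n ∂volume, f z ≠ 0 → v z ≠ 0 := by
      have hFfin := eN_ae_lt_top (n := n) (p := r)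
        (@ENNReal.HolderConjugate.ne_zero r r' (ENNReal.holderConjugate_iff.mpr hconj)) hFmeas hfN.ne
      filter_upwards [hFfin] with z hz hfz hvz
      rw [hFdef] at hz
      simp only [hvz, ENNReal.inv_zero] at hz
      rw [ENNReal.mul_top (by simpa [abs_eq_zero] using hfz : ENNReal.ofReal |f z| ≠ 0)] at hz
      exact (lt_irrefl _ hz).elim
    -- step 1: pointwise size/smoothness bound
    have hDne : ENNReal.ofReal A * ENNReal.ofReal Cb ^ m ≠ ∞ :=
      ENNReal.mul_ne_top ofReal_ne_top (by simp [ENNReal.pow_ne_top])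
    have step1 : (∫⁻ x in B, ∫⁻ z in ball c (2*R),
        ENNReal.ofReal (|b x - b z| ^ m * |K (x - z)| * |f z|)) ≤
        ENNReal.ofReal A * ENNReal.ofReal Cb ^ m *
          ∫⁻ x in B, ∫⁻ z in ball c (2*R),
            ENNReal.ofReal (‖x - z‖ ^ (αt - (n:ℝ))) * ENNReal.ofReal |f z| := by
      rw [← lintegral_const_mul' _ _ hDne]
      refine lintegral_mono fun x => ?_
      rw [← lintegral_const_mul' _ _ hDne]
      refine lintegral_mono_ae ?_
      have hne : ∀ᵐ (z : E n) ∂(volume.restrict (ball c (2*R))), z ≠ x := by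
        refine ae_restrict_of_ae ?_
        rw [MeasureTheory.ae_iff]
        have hxx : {z : E n | ¬ z ≠ x} = {x} := by ext z; simp
        rw [hxx]
        exact measure_singleton x
      filter_upwards [hne] with z hz
      have hd : (0:ℝ) < dist x z := dist_pos.mpr hz.symm
      have hnorm : (0:ℝ) < ‖x - z‖ := by rwa [← dist_eq_norm]
      have hxz : x - z ≠ 0 := by
        intro h; rw [h, norm_zero] at hnorm; exact lt_irrefl _ hnorm
      have h1 : |b x - b z| ^ m ≤ Cb ^ m * dist x z ^ (δ * (m:ℝ)) := by
        calc |b x - b z| ^ m ≤ (Cb * dist x z ^ δ) ^ m :=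
              pow_le_pow_left₀ (abs_nonneg _) (hLip x z) m
          _ = Cb ^ m * (dist x z ^ δ) ^ m := mul_pow _ _ _
          _ = Cb ^ m * dist x z ^ (δ * (m:ℝ)) := by
              rw [← Real.rpow_natCast (dist x z ^ δ) m, ← Real.rpow_mul hd.le]
      have h2 : |K (x - z)| ≤ A * ‖x - z‖ ^ (α - (n:ℝ)) := hKsize _ hxz
      have key2 : dist x z ^ (δ * (m:ℝ)) * ‖x - z‖ ^ (α - (n:ℝ)) = ‖x - z‖ ^ (αt - (n:ℝ)) := by
        rw [dist_eq_norm, ← Real.rpow_add hnorm]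
        congr 1
        rw [hαt]; ring
      calc ENNReal.ofReal (|b x - b z| ^ m * |K (x - z)| * |f z|)
          ≤ ENNReal.ofReal (A * Cb ^ m * (‖x - z‖ ^ (αt - (n:ℝ)) * |f z|)) := by
            apply ENNReal.ofReal_le_ofReal
            calc |b x - b z| ^ m * |K (x - z)| * |f z|
                ≤ (Cb ^ m * dist x z ^ (δ * (m:ℝ))) * (A * ‖x - z‖ ^ (α - (n:ℝ))) * |f z| := by
                  apply mul_le_mul _ le_rfl (abs_nonneg _) (by positivity)
                  exact mul_le_mul h1 h2 (abs_nonneg _) (by positivity)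
              _ = A * Cb ^ m * (dist x z ^ (δ * (m:ℝ)) * ‖x - z‖ ^ (α - (n:ℝ)) * |f z|) := by ring
              _ = A * Cb ^ m * (‖x - z‖ ^ (αt - (n:ℝ)) * |f z|) := by rw [key2]
        _ = ENNReal.ofReal A * ENNReal.ofReal Cb ^ m *
              (ENNReal.ofReal (‖x - z‖ ^ (αt - (n:ℝ))) * ENNReal.ofReal |f z|) := by
            rw [ENNReal.ofReal_mul (by positivity), ENNReal.ofReal_mul hA,
              ENNReal.ofReal_mul (by positivity), ENNReal.ofReal_pow hCb]
    -- step 2+3: swap and kernel bound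
    have hswap : (∫⁻ x in B, ∫⁻ z in ball c (2*R),
        ENNReal.ofReal (‖x - z‖ ^ (αt - (n:ℝ))) * ENNReal.ofReal |f z|) =
        ∫⁻ z in ball c (2*R), ∫⁻ x in B,
          ENNReal.ofReal (‖x - z‖ ^ (αt - (n:ℝ))) * ENNReal.ofReal |f z| := by
      apply lintegral_lintegral_swap
      apply Measurable.aemeasurable
      apply Measurable.mul (f := fun p : E n × E n => ENNReal.ofReal (‖p.1 - p.2‖ ^ (αt - (n:ℝ))))
        (g := fun p : E n × E n => ENNReal.ofReal |f p.2|)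
      · exact ENNReal.measurable_ofReal.comp
          (((measurable_fst.sub measurable_snd).norm).pow measurable_const)
      · exact ENNReal.measurable_ofReal.comp
          (continuous_abs.measurable.comp (hf.comp measurable_snd))
    set c₂ : ℝ≥0∞ := c₁ * ENNReal.ofReal ((3*R) ^ αt) with hc₂def
    have hc₂t : c₂ ≠ ∞ := ENNReal.mul_ne_top hc₁top ofReal_ne_top
    have hker' : ∀ z ∈ ball c (2*R), (∫⁻ x in B, ENNReal.ofReal (‖x - z‖ ^ (αt - (n:ℝ)))) ≤ c₂ := by
      intro z hz
      refine le_trans (lintegral_mono_set ?_) (hker z (3*R) (by linarith))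
      intro x hx
      rw [mem_ball] at hx ⊢
      calc dist x z ≤ dist x c + dist c z := dist_triangle _ _ _
        _ < R + 2*R := add_lt_add hx (by rwa [dist_comm, ← mem_ball])
        _ = 3*R := by ring
    have step2 : (∫⁻ z in ball c (2*R), ∫⁻ x in B,
        ENNReal.ofReal (‖x - z‖ ^ (αt - (n:ℝ))) * ENNReal.ofReal |f z|) ≤
        c₂ * ∫⁻ z in ball c (2*R), ENNReal.ofReal |f z| := by
      rw [← lintegral_const_mul' _ _ hc₂t]
      refine setLIntegral_mono' measurableSet_ball fun z hz => ?_
      rw [lintegral_mul_const' _ _ ofReal_ne_top]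
      exact mul_le_mul_left (hker' z hz) _
    -- step 4: insert the weight
    have step4 : (∫⁻ z in ball c (2*R), ENNReal.ofReal |f z|) ≤
        τ ^ ((n:ℝ) - αt + δ) * (N * M) := by
      have hptwise : ∀ᵐ z ∂(volume.restrict (ball c (2*R))),
          ENNReal.ofReal |f z| ≤ τ ^ ((n:ℝ) - αt + δ) * (F z * (v z * g z)) := by
        filter_upwards [ae_restrict_of_ae hvfin, ae_restrict_of_ae hfv,
          ae_restrict_mem measurableSet_ball] with z h1 h2 hz
        rcases eq_or_ne (f z) 0 with hf0 | hf0
        · simp [hFdef, hf0]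
        have hv0 := h2 hf0
        have hbase : (volume B ^ ((1:ℝ)/(n:ℝ)) + ENNReal.ofReal (dist c z)) ≤ τ := by
          rw [hτdef]
          exact add_le_add_right (ENNReal.ofReal_le_ofReal
            (by rw [dist_comm]; exact (mem_ball.mp hz).le)) _
        have hg : τ ^ (-((n:ℝ) - αt + δ)) ≤ g z := by
          rw [hgdef]
          simp only
          rw [ENNReal.rpow_neg, ENNReal.rpow_neg]
          exact ENNReal.inv_le_inv' (ENNReal.rpow_le_rpow hbase (by linarith))
        calc ENNReal.ofReal |f z|
            = ENNReal.ofReal |f z| * ((v z)⁻¹ * v z) *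
                (τ ^ ((n:ℝ) - αt + δ) * τ ^ (-((n:ℝ) - αt + δ))) := by
              rw [ENNReal.inv_mul_cancel hv0 h1, mul_one, ← ENNReal.rpow_add _ _ hτ0 hτt,
                show ((n:ℝ) - αt + δ) + -((n:ℝ) - αt + δ) = 0 from by ring,
                ENNReal.rpow_zero, mul_one]
          _ ≤ ENNReal.ofReal |f z| * ((v z)⁻¹ * v z) * (τ ^ ((n:ℝ) - αt + δ) * g z) := by
              gcongr
          _ = τ ^ ((n:ℝ) - αt + δ) * (F z * (v z * g z)) := by
              rw [hFdef]; ring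
      calc (∫⁻ z in ball c (2*R), ENNReal.ofReal |f z|)
          ≤ ∫⁻ z in ball c (2*R), τ ^ ((n:ℝ) - αt + δ) * (F z * (v z * g z)) :=
            lintegral_mono_ae hptwise
        _ = τ ^ ((n:ℝ) - αt + δ) * ∫⁻ z in ball c (2*R), F z * (v z * g z) :=
            lintegral_const_mul' _ _ (my_rpow_ne_top hτ0 hτt _)
        _ ≤ τ ^ ((n:ℝ) - αt + δ) * ∫⁻ z, F z * (v z * g z) :=
            mul_le_mul_right (setLIntegral_le_lintegral _ _) _
        _ ≤ τ ^ ((n:ℝ) - αt + δ) * (N * M) := by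
            refine mul_le_mul_right ?_ _
            exact hoelder r r' hconj F (fun z => v z * g z) hFmeas (hv.mul hgmeas)
    -- step 6: use the Hclass condition
    have step6 : W * M ≤ (Cw : ℝ≥0∞) * (volume B ^ ((δ - δt)/(n:ℝ)))⁻¹ := by
      have : W * M = W * volume B ^ ((δ - δt)/(n:ℝ)) * M * (volume B ^ ((δ - δt)/(n:ℝ)))⁻¹ := by
        rw [show W * volume B ^ ((δ - δt)/(n:ℝ)) * M * (volume B ^ ((δ - δt)/(n:ℝ)))⁻¹
            = W * M * (volume B ^ ((δ - δt)/(n:ℝ)) * (volume B ^ ((δ - δt)/(n:ℝ)))⁻¹) from by ring,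
          ENNReal.mul_inv_cancel hP0 hPt, mul_one]
      rw [this]
      exact mul_le_mul_left hH' _
    -- final arithmetic
    have hτκ : τ = ENNReal.ofReal R * κ := by
      rw [hτdef, hκdef, hpow ((1:ℝ)/(n:ℝ)),
        show (n:ℝ) * ((1:ℝ)/(n:ℝ)) = 1 from by field_simp, Real.rpow_one,
        ENNReal.ofReal_mul (by norm_num), mul_add]
      ring
    have hτβ : τ ^ ((n:ℝ) - αt + δ) = ENNReal.ofReal (R ^ ((n:ℝ) - αt + δ)) *
        κ ^ ((n:ℝ) - αt + δ) := by
      rw [hτκ, ENNReal.mul_rpow_of_ne_top ofReal_ne_top hκt,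
        ENNReal.ofReal_rpow_of_pos hR]
    have hc₂' : c₂ = c₁ * ENNReal.ofReal ((3:ℝ) ^ αt) * ENNReal.ofReal (R ^ αt) := by
      rw [hc₂def, Real.mul_rpow (by norm_num) hR.le, ENNReal.ofReal_mul (by positivity), mul_assoc]
    have hPinv : (volume B ^ ((δ - δt)/(n:ℝ)))⁻¹ =
        ENNReal.ofReal (R ^ (-(δ - δt))) * ω ^ (-((δ - δt)/(n:ℝ))) := by
      rw [hpow ((δ - δt)/(n:ℝ)), show (n:ℝ) * ((δ - δt)/(n:ℝ)) = δ - δt from by field_simp,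
        ENNReal.mul_inv (Or.inl (ENNReal.ofReal_pos.mpr (by positivity)).ne')
          (Or.inl ofReal_ne_top),
        ← ENNReal.ofReal_inv_of_pos (by positivity), ← Real.rpow_neg hR.le, ENNReal.rpow_neg]
    have hvolpow : ENNReal.ofReal (R ^ ((n:ℝ) + δt)) =
        volume B ^ (1 + δt/(n:ℝ)) * ω ^ (-(1 + δt/(n:ℝ))) := by
      rw [hpow (1 + δt/(n:ℝ)), show (n:ℝ) * (1 + δt/(n:ℝ)) = (n:ℝ) + δt from by field_simp,
        mul_assoc, ← ENNReal.rpow_add _ _ hω0 hωt,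
        show (1 + δt/(n:ℝ)) + -(1 + δt/(n:ℝ)) = 0 from by ring, ENNReal.rpow_zero, mul_one]
    have hRcomb : ENNReal.ofReal (R ^ αt) * ENNReal.ofReal (R ^ ((n:ℝ) - αt + δ)) *
        ENNReal.ofReal (R ^ (-(δ - δt))) = ENNReal.ofReal (R ^ ((n:ℝ) + δt)) := by
      rw [← ENNReal.ofReal_mul (by positivity), ← ENNReal.ofReal_mul (by positivity),
        ← Real.rpow_add hR, ← Real.rpow_add hR]
      congr 1
      ring
    -- combine everything
    calc W * (∫⁻ x in B, ∫⁻ z in ball c (2*R),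
          ENNReal.ofReal (|b x - b z| ^ m * |K (x - z)| * |f z|))
        ≤ W * (ENNReal.ofReal A * ENNReal.ofReal Cb ^ m *
            (c₂ * (τ ^ ((n:ℝ) - αt + δ) * (N * M)))) := by
          refine mul_le_mul_right (step1.trans (mul_le_mul_right ?_ _)) W
          rw [hswap]
          exact step2.trans (mul_le_mul_right step4 _)
      _ = ENNReal.ofReal A * ENNReal.ofReal Cb ^ m * c₂ * τ ^ ((n:ℝ) - αt + δ) * N * (W * M) := by
          ring
      _ ≤ ENNReal.ofReal A * ENNReal.ofReal Cb ^ m * c₂ * τ ^ ((n:ℝ) - αt + δ) * N *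
            ((Cw : ℝ≥0∞) * (volume B ^ ((δ - δt)/(n:ℝ)))⁻¹) := mul_le_mul_right step6 _
      _ = ENNReal.ofReal A * ENNReal.ofReal Cb ^ m * (c₁ * ENNReal.ofReal ((3:ℝ) ^ αt)) *
            κ ^ ((n:ℝ) - αt + δ) * ω ^ (-((δ - δt)/(n:ℝ))) * (Cw : ℝ≥0∞) *
            (ENNReal.ofReal (R ^ αt) * ENNReal.ofReal (R ^ ((n:ℝ) - αt + δ)) *
              ENNReal.ofReal (R ^ (-(δ - δt)))) * N := by
          rw [hc₂', hτβ, hPinv]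
          ring
      _ = T * ENNReal.ofReal Cb ^ m * volume B ^ (1 + δt/(n:ℝ)) * N := by
          rw [hRcomb, hvolpow, hTdef]
          ring
      _ ≤ ((T.toNNReal + 1 : ℝ≥0) : ℝ≥0∞) * ENNReal.ofReal Cb ^ m *
            volume B ^ (1 + δt/(n:ℝ)) * N := by gcongr
  constructor
  · exact hmain
  · refine le_trans (mul_le_mul_right ?_ W) hmain
    refine lintegral_mono fun x => ?_
    calc ENNReal.ofReal |∫ z in ball c (2*R), (b x - b z) ^ m * K (x - z) * f z|
        = ‖∫ z in ball c (2*R), (b x - b z) ^ m * K (x - z) * f z‖ₑ :=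
          (Real.enorm_eq_ofReal_abs _).symm
      _ ≤ ∫⁻ z in ball c (2*R), ‖(b x - b z) ^ m * K (x - z) * f z‖ₑ :=
          enorm_integral_le_lintegral_enorm _
      _ = ∫⁻ z in ball c (2*R), ENNReal.ofReal (|b x - b z| ^ m * |K (x - z)| * |f z|) := by
          refine lintegral_congr fun z => ?_
          rw [Real.enorm_eq_ofReal_abs, abs_mul, abs_mul, abs_pow]
end
end
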